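/- arXiv:1401.6755 — 8 statements merged into one kernel-verified Lean document; each statement's English description precedes it below -/
import Mathlib

section
/- Let G be a finite group. Then the power graph P(G) is claw-free if and only if G is a cyclic group whose order is of the form p^m q^n, where p and q are distinct primes, m, n ≥ 0 are integers, and m ≤ 1 or n ≤ 1. -/
/-- Adjacency in the power graph of a group: two distinct elements are adjacent
iff one is a power of the other. -/
def pgAdj {G : Type*} [Group G] (x y : G) : Prop :=
  x ≠ y ∧ (x ∈ Subgroup.zpowers y ∨ y ∈ Subgroup.zpowers x)

/-- The power graph is claw-free (`K_{1,3}`-free). -/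
def pgClawFree (G : Type*) [Group G] : Prop :=
  ¬ ∃ a b c d : G, b ≠ c ∧ b ≠ d ∧ c ≠ d ∧
      pgAdj a b ∧ pgAdj a c ∧ pgAdj a d ∧
      ¬ pgAdj b c ∧ ¬ pgAdj b d ∧ ¬ pgAdj c d

open Subgroup

/-- In a finite group, if `zpowers a ≤ zpowers b` with `orderOf b ≤ orderOf a`
then `b ∈ zpowers a`. -/
lemma mem_zpowers_of_le_of_orderOf_le {G : Type*} [Group G] [Finite G] {a b : G}
    (h : Subgroup.zpowers a ≤ Subgroup.zpowers b) (ho : orderOf b ≤ orderOf a) :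
    b ∈ Subgroup.zpowers a := by
  have h1 : (Subgroup.zpowers a : Set G) = (Subgroup.zpowers b : Set G) := by
    apply Set.eq_of_subset_of_ncard_le h ?_ (Set.toFinite _)
    rw [← Nat.card_coe_set_eq, ← Nat.card_coe_set_eq]
    simpa [Nat.card_zpowers] using ho
  have : b ∈ (Subgroup.zpowers b : Set G) := mem_zpowers b
  rw [← h1] at this
  exact this

/-- In a finite cyclic group, order divisibility implies membership in zpowers. -/
lemma mem_zpowers_of_orderOf_dvd {G : Type*} [Group G] [Finite G] [IsCyclic G]
    {b c : G} (h : orderOf b ∣ orderOf c) : b ∈ Subgroup.zpowers c := by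
  classical
  cases nonempty_fintype G
  have hc : 0 < orderOf c := orderOf_pos c
  have hsub : (Subgroup.zpowers c : Set G).toFinset ⊆
      Finset.univ.filter (fun x : G => x ^ orderOf c = 1) := by
    intro x hx
    simp only [Set.mem_toFinset, SetLike.mem_coe] at hx
    simp only [Finset.mem_filter, Finset.mem_univ, true_and]
    exact orderOf_dvd_iff_pow_eq_one.mp (orderOf_dvd_of_mem_zpowers hx)
  have hcard : (Finset.univ.filter (fun x : G => x ^ orderOf c = 1)).card ≤ orderOf c :=
    IsCyclic.card_pow_eq_one_le hc
  have hcard2 : (Subgroup.zpowers c : Set G).toFinset.card = orderOf c := by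
    rw [Set.toFinset_card]
    simpa [Nat.card_eq_fintype_card] using Nat.card_zpowers c
  have heq := Finset.eq_of_subset_of_card_le hsub (hcard.trans hcard2.ge)
  have hb : b ∈ Finset.univ.filter (fun x : G => x ^ orderOf c = 1) := by
    simp only [Finset.mem_filter, Finset.mem_univ, true_and]
    exact orderOf_dvd_iff_pow_eq_one.mp h
  rw [← heq, Set.mem_toFinset] at hb
  exact hb

/-- Existence of an element of any order dividing the cardinality, in a cyclic group. -/
lemma exists_orderOf_eq_of_dvd {G : Type*} [Group G] [Finite G] [IsCyclic G] {d : ℕ}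
    (hd : d ∣ Nat.card G) : ∃ x : G, orderOf x = d := by
  obtain ⟨g, hg⟩ := IsCyclic.exists_ofOrder_eq_natCard (α := G)
  have hN : 0 < Nat.card G := Nat.card_pos
  refine ⟨g ^ (Nat.card G / d), ?_⟩
  rw [orderOf_pow, hg]
  have hdvd : Nat.card G / d ∣ Nat.card G := Nat.div_dvd_of_dvd hd
  rw [Nat.gcd_eq_right hdvd]
  exact Nat.div_div_self hd hN.ne'

/-- No independent triple of nonidentity elements in a claw-free power graph. -/
lemma no_indep_triple {G : Type*} [Group G] (h : pgClawFree G) {b c d : G}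
    (hb : b ≠ 1) (hc : c ≠ 1) (hd : d ≠ 1) (hbc : b ≠ c) (hbd : b ≠ d) (hcd : c ≠ d)
    (h1 : b ∉ Subgroup.zpowers c) (h2 : c ∉ Subgroup.zpowers b)
    (h3 : b ∉ Subgroup.zpowers d) (h4 : d ∉ Subgroup.zpowers b)
    (h5 : c ∉ Subgroup.zpowers d) (h6 : d ∉ Subgroup.zpowers c) : False := by
  apply h
  refine ⟨1, b, c, d, hbc, hbd, hcd, ⟨fun e => hb e.symm, Or.inl (one_mem _)⟩,
    ⟨fun e => hc e.symm, Or.inl (one_mem _)⟩, ⟨fun e => hd e.symm, Or.inl (one_mem _)⟩,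
    ?_, ?_, ?_⟩
  · rintro ⟨-, h | h⟩; exacts [h1 h, h2 h]
  · rintro ⟨-, h | h⟩; exacts [h3 h, h4 h]
  · rintro ⟨-, h | h⟩; exacts [h5 h, h6 h]

/-- No three elements with pairwise non-dividing orders, in a claw-free power graph. -/
lemma no_three_incomparable {G : Type*} [Group G] (h : pgClawFree G) {b c d : G}
    (hbc : ¬ orderOf b ∣ orderOf c) (hcb : ¬ orderOf c ∣ orderOf b)
    (hbd : ¬ orderOf b ∣ orderOf d) (hdb : ¬ orderOf d ∣ orderOf b)
    (hcd : ¬ orderOf c ∣ orderOf d) (hdc : ¬ orderOf d ∣ orderOf c) : False := by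
  have hb : b ≠ 1 := fun e => hbc (by simp [e])
  have hc : c ≠ 1 := fun e => hcb (by simp [e])
  have hd : d ≠ 1 := fun e => hdb (by simp [e])
  refine no_indep_triple h hb hc hd ?_ ?_ ?_ ?_ ?_ ?_ ?_ ?_ ?_
  · exact fun e => hbc (e ▸ dvd_rfl)
  · exact fun e => hbd (e ▸ dvd_rfl)
  · exact fun e => hcd (e ▸ dvd_rfl)
  · exact fun m => hbc (orderOf_dvd_of_mem_zpowers m)
  · exact fun m => hcb (orderOf_dvd_of_mem_zpowers m)
  · exact fun m => hbd (orderOf_dvd_of_mem_zpowers m)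
  · exact fun m => hdb (orderOf_dvd_of_mem_zpowers m)
  · exact fun m => hcd (orderOf_dvd_of_mem_zpowers m)
  · exact fun m => hdc (orderOf_dvd_of_mem_zpowers m)

/-- Every element of a finite group lies under a maximal cyclic subgroup. -/
lemma exists_maximal_above {G : Type*} [Group G] [Finite G] (x : G) :
    ∃ m : G, x ∈ Subgroup.zpowers m ∧
      ∀ y, m ∈ Subgroup.zpowers y → y ∈ Subgroup.zpowers m := by
  classical
  cases nonempty_fintype G
  obtain ⟨m, hm, hmax⟩ := Finset.exists_max_image
    (Finset.univ.filter (fun y : G => x ∈ Subgroup.zpowers y)) orderOf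
    ⟨x, by simp [Subgroup.mem_zpowers]⟩
  simp only [Finset.mem_filter, Finset.mem_univ, true_and] at hm
  refine ⟨m, hm, fun y hy => ?_⟩
  have hle : Subgroup.zpowers m ≤ Subgroup.zpowers y := Subgroup.zpowers_le.mpr hy
  have hxy : x ∈ Subgroup.zpowers y := hle hm
  have h1 : orderOf y ≤ orderOf m := hmax y (by simp [hxy])
  exact mem_zpowers_of_le_of_orderOf_le hle h1

/-- Claw-freeness of the power graph implies cyclicity. -/
lemma isCyclic_of_pgClawFree {G : Type*} [Group G] [Finite G] (h : pgClawFree G) :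
    IsCyclic G := by
  rcases subsingleton_or_nontrivial G with hs | hs
  · infer_instance
  by_contra hnc
  obtain ⟨x, hx⟩ := exists_ne (1 : G)
  obtain ⟨m1, hxm1, hmax1⟩ := exists_maximal_above x
  have hproper : ∀ g : G, ∃ z : G, z ∉ Subgroup.zpowers g := by
    intro g
    by_contra hz
    push_neg at hz
    exact hnc ⟨⟨g, hz⟩⟩
  obtain ⟨a, ha⟩ := hproper m1
  obtain ⟨m2, ham2, hmax2⟩ := exists_maximal_above a
  have h21 : m2 ∉ Subgroup.zpowers m1 := fun hm =>
    ha ((Subgroup.zpowers_le.mpr hm) ham2)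
  have h12 : m1 ∉ Subgroup.zpowers m2 := fun hm => h21 (hmax1 m2 hm)
  -- find z outside both
  have hz : ∃ z : G, z ∉ Subgroup.zpowers m1 ∧ z ∉ Subgroup.zpowers m2 := by
    by_contra hz
    push_neg at hz
    obtain ⟨v, hv⟩ := hproper m2
    have hv1 : v ∈ Subgroup.zpowers m1 := by
      by_contra hv1; exact hv (hz v hv1)
    have hu2 : a ∈ Subgroup.zpowers m2 := ham2
    rcases em (a * v ∈ Subgroup.zpowers m1) with hm | hm
    · exact ha (by simpa using mul_mem hm (inv_mem hv1))
    · have : a * v ∈ Subgroup.zpowers m2 := hz _ hm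
      exact hv (by simpa using mul_mem (inv_mem hu2) this)
  obtain ⟨z, hz1, hz2⟩ := hz
  obtain ⟨m3, hzm3, hmax3⟩ := exists_maximal_above z
  have h31 : m3 ∉ Subgroup.zpowers m1 := fun hm =>
    hz1 ((Subgroup.zpowers_le.mpr hm) hzm3)
  have h13 : m1 ∉ Subgroup.zpowers m3 := fun hm => h31 (hmax1 m3 hm)
  have h32 : m3 ∉ Subgroup.zpowers m2 := fun hm =>
    hz2 ((Subgroup.zpowers_le.mpr hm) hzm3)
  have h23 : m2 ∉ Subgroup.zpowers m3 := fun hm => h32 (hmax2 m3 hm)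
  have hm1ne : m1 ≠ 1 := by
    rintro rfl
    rw [Subgroup.zpowers_one_eq_bot, Subgroup.mem_bot] at hxm1
    exact hx hxm1
  have hm2ne : m2 ≠ 1 := by
    rintro rfl
    exact h21 (Subgroup.one_mem _)
  have hm3ne : m3 ≠ 1 := by
    rintro rfl
    exact h31 (Subgroup.one_mem _)
  exact no_indep_triple h hm1ne hm2ne hm3ne
    (fun e => h12 (e ▸ mem_zpowers m1)) (fun e => h13 (e ▸ mem_zpowers m1))
    (fun e => h23 (e ▸ mem_zpowers m2)) h12 h21 h13 h31 h23 h32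

/-- Arithmetic helper: a number whose prime factors lie in `{p, q}` is `p ^ a * q ^ b`. -/
lemma eq_pow_mul_pow {p q N : ℕ} (hp : p.Prime) (hq : q.Prime) (hpq : p ≠ q) (hN : N ≠ 0)
    (h : ∀ r ∈ N.primeFactors, r = p ∨ r = q) :
    N = p ^ N.factorization p * q ^ N.factorization q := by
  set m := N.factorization p
  set n := N.factorization q
  have hne : p ^ m * q ^ n ≠ 0 :=
    Nat.mul_ne_zero (pow_ne_zero _ hp.pos.ne') (pow_ne_zero _ hq.pos.ne')
  have hfac : (p ^ m * q ^ n).factorization = N.factorization := by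
    rw [Nat.factorization_mul (pow_ne_zero _ hp.pos.ne') (pow_ne_zero _ hq.pos.ne'),
      Nat.Prime.factorization_pow hp, Nat.Prime.factorization_pow hq]
    ext r
    rcases eq_or_ne r p with rfl | hrp
    · simp [Finsupp.single_apply, hpq, Ne.symm hpq]; rfl
    rcases eq_or_ne r q with rfl | hrq
    · simp [Finsupp.single_apply, hpq, Ne.symm hpq, hrp]; rfl
    · have : N.factorization r = 0 := by
        by_contra h0
        have hr : r ∈ N.primeFactors := by
          rw [← Nat.support_factorization]
          exact Finsupp.mem_support_iff.mpr h0
        rcases h r hr with rfl | rfl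
        · exact hrp rfl
        · exact hrq rfl
      simp only [Finsupp.coe_add, Pi.add_apply, Finsupp.single_apply, this]
      rw [if_neg (fun e => hrp e.symm), if_neg (fun e => hrq e.symm)]
      rfl
  have h1 : p ^ m * q ^ n ∣ N := by
    rw [← Nat.factorization_le_iff_dvd hne hN, hfac]
  have h2 : N ∣ p ^ m * q ^ n := by
    rw [← Nat.factorization_le_iff_dvd hN hne, hfac]

  exact (Nat.dvd_antisymm h2 h1)

/-- Claw-freeness forbids `p² q² ∣ |G|` for distinct primes, in a cyclic group. -/
lemma not_both_sq {G : Type*} [Group G] [Finite G] [IsCyclic G] (h : pgClawFree G)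
    {p q : ℕ} (hp : p.Prime) (hq : q.Prime) (hpq : p ≠ q)
    (h2 : p ^ 2 ∣ Nat.card G) (h3 : q ^ 2 ∣ Nat.card G) : False := by
  obtain ⟨b, hb⟩ := exists_orderOf_eq_of_dvd (G := G) h2
  obtain ⟨c, hc⟩ := exists_orderOf_eq_of_dvd (G := G) h3
  have hpqd : p * q ∣ Nat.card G := Nat.Coprime.mul_dvd_of_dvd_of_dvd
    (Nat.coprime_primes hp hq |>.mpr hpq)
    (dvd_trans (dvd_pow_self p two_ne_zero) h2)
    (dvd_trans (dvd_pow_self q two_ne_zero) h3)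
  obtain ⟨d, hd⟩ := exists_orderOf_eq_of_dvd (G := G) hpqd
  have hpndq : ¬ p ∣ q := fun hdvd => hpq ((Nat.prime_dvd_prime_iff_eq hp hq).mp hdvd)
  have hqndp : ¬ q ∣ p := fun hdvd => hpq ((Nat.prime_dvd_prime_iff_eq hq hp).mp hdvd).symm
  refine no_three_incomparable h (b := b) (c := c) (d := d) ?_ ?_ ?_ ?_ ?_ ?_ <;>
    simp only [hb, hc, hd] <;> intro hdvd
  · exact hpndq (hp.dvd_of_dvd_pow (dvd_trans (dvd_pow_self p two_ne_zero) hdvd))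
  · exact hqndp (hq.dvd_of_dvd_pow (dvd_trans (dvd_pow_self q two_ne_zero) hdvd))
  · rw [pow_two] at hdvd
    exact hpndq ((Nat.mul_dvd_mul_iff_left hp.pos).mp hdvd)
  · rw [pow_two] at hdvd
    exact hqndp ((Nat.mul_dvd_mul_iff_left hp.pos).mp hdvd)
  · rw [pow_two, mul_comm p q] at hdvd
    exact hqndp ((Nat.mul_dvd_mul_iff_left hq.pos).mp hdvd)
  · rw [mul_comm p q, pow_two] at hdvd
    exact hpndq ((Nat.mul_dvd_mul_iff_left hq.pos).mp hdvd)

/-- Three elements of pairwise distinct prime orders give a claw. -/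
lemma three_primes_claw {G : Type*} [Group G] [Finite G] [IsCyclic G] (h : pgClawFree G)
    {p q r : ℕ} (hp : p.Prime) (hq : q.Prime) (hr : r.Prime)
    (hpq : p ≠ q) (hpr : p ≠ r) (hqr : q ≠ r)
    (dp : p ∣ Nat.card G) (dq : q ∣ Nat.card G) (dr : r ∣ Nat.card G) : False := by
  obtain ⟨b, hb⟩ := exists_orderOf_eq_of_dvd (G := G) dp
  obtain ⟨c, hc⟩ := exists_orderOf_eq_of_dvd (G := G) dq
  obtain ⟨d, hd⟩ := exists_orderOf_eq_of_dvd (G := G) dr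
  refine no_three_incomparable h (b := b) (c := c) (d := d) ?_ ?_ ?_ ?_ ?_ ?_ <;>
    simp only [hb, hc, hd] <;> intro hdvd
  · exact hpq ((Nat.prime_dvd_prime_iff_eq hp hq).mp hdvd)
  · exact hpq (((Nat.prime_dvd_prime_iff_eq hq hp).mp hdvd)).symm
  · exact hpr ((Nat.prime_dvd_prime_iff_eq hp hr).mp hdvd)
  · exact hpr (((Nat.prime_dvd_prime_iff_eq hr hp).mp hdvd)).symm
  · exact hqr ((Nat.prime_dvd_prime_iff_eq hq hr).mp hdvd)
  · exact hqr (((Nat.prime_dvd_prime_iff_eq hr hq).mp hdvd)).symm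

/-- Backward direction: cyclic of order `p^m q^n` with `m ≤ 1` is claw-free. -/
lemma clawfree_of_cyclic {G : Type*} [Group G] [Finite G] [IsCyclic G] {p q m n : ℕ}
    (hp : p.Prime) (hq : q.Prime) (hpq : p ≠ q) (hm : m ≤ 1)
    (hcard : Nat.card G = p ^ m * q ^ n) : pgClawFree G := by
  rintro ⟨a, b, c, d, hbc, hbd, hcd, -, -, -, nbc, nbd, ncd⟩
  have hN : Nat.card G ≠ 0 := Nat.card_pos.ne'
  have hordfac : ∀ u : G, orderOf u =
      p ^ ((orderOf u).factorization p) * q ^ ((orderOf u).factorization q) := by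
    intro u
    apply eq_pow_mul_pow hp hq hpq (orderOf_pos u).ne'
    intro r hr
    have hrp : r.Prime := Nat.prime_of_mem_primeFactors hr
    have hrd : r ∣ Nat.card G := (Nat.dvd_of_mem_primeFactors hr).trans (orderOf_dvd_natCard u)
    rw [hcard] at hrd
    rcases (Nat.Prime.dvd_mul hrp).mp hrd with h1 | h1
    · exact Or.inl ((Nat.prime_dvd_prime_iff_eq hrp hp).mp (hrp.dvd_of_dvd_pow h1))
    · exact Or.inr ((Nat.prime_dvd_prime_iff_eq hrp hq).mp (hrp.dvd_of_dvd_pow h1))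
  have hvalN : (Nat.card G).factorization p = m := by
    rw [hcard, Nat.factorization_mul (pow_ne_zero _ hp.pos.ne') (pow_ne_zero _ hq.pos.ne'),
      Nat.Prime.factorization_pow hp, Nat.Prime.factorization_pow hq]
    simp [Finsupp.single_apply, hpq, Ne.symm hpq]
  have hle : ∀ u : G, (orderOf u).factorization p ≤ 1 := by
    intro u
    have h1 : (orderOf u).factorization ≤ (Nat.card G).factorization :=
      (Nat.factorization_le_iff_dvd (orderOf_pos u).ne' hN).mpr (orderOf_dvd_natCard u)
    have h2 : (orderOf u).factorization p ≤ (Nat.card G).factorization p :=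
      Finsupp.le_def.mp h1 p
    omega
  have key : ∀ u v : G, u ≠ v →
      (orderOf u).factorization p = (orderOf v).factorization p → pgAdj u v := by
    intro u v huv hval
    rcases le_total ((orderOf u).factorization q) ((orderOf v).factorization q) with hle' | hle'
    · have hdvd : orderOf u ∣ orderOf v := by
        conv_lhs => rw [hordfac u]
        conv_rhs => rw [hordfac v]
        rw [hval]
        exact mul_dvd_mul dvd_rfl (pow_dvd_pow _ hle')
      exact ⟨huv, Or.inl (mem_zpowers_of_orderOf_dvd hdvd)⟩
    · have hdvd : orderOf v ∣ orderOf u := by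
        conv_lhs => rw [hordfac v]
        conv_rhs => rw [hordfac u]
        rw [hval]
        exact mul_dvd_mul dvd_rfl (pow_dvd_pow _ hle')
      exact ⟨huv, Or.inr (mem_zpowers_of_orderOf_dvd hdvd)⟩
  have hb1 := hle b
  have hc1 := hle c
  have hd1 := hle d
  have htri : (orderOf b).factorization p = (orderOf c).factorization p ∨
      (orderOf b).factorization p = (orderOf d).factorization p ∨
      (orderOf c).factorization p = (orderOf d).factorization p := by omega
  rcases htri with h' | h' | h'
  · exact nbc (key b c hbc h')
  · exact nbd (key b d hbd h')
  · exact ncd (key c d hcd h')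

theorem clawfree_iff_cyclic_pm_qn {G : Type*} [Group G] [Finite G] :
    pgClawFree G ↔
      ∃ p q m n : ℕ, p.Prime ∧ q.Prime ∧ p ≠ q ∧ (m ≤ 1 ∨ n ≤ 1) ∧
        IsCyclic G ∧ Nat.card G = p ^ m * q ^ n := by
  constructor
  · intro h
    have hcyc : IsCyclic G := isCyclic_of_pgClawFree h
    have hN : Nat.card G ≠ 0 := Nat.card_pos.ne'
    by_cases hP : (Nat.card G).primeFactors = ∅
    · have h1 : Nat.card G = 1 := by
        rcases Nat.primeFactors_eq_empty.mp hP with h0 | h1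
        · exact absurd h0 hN
        · exact h1
      exact ⟨2, 3, 0, 0, Nat.prime_two, Nat.prime_three, by norm_num, Or.inl (by norm_num),
        hcyc, by simp [h1]⟩
    · obtain ⟨p, hpmem⟩ := Finset.nonempty_iff_ne_empty.mpr hP
      have hp : p.Prime := Nat.prime_of_mem_primeFactors hpmem
      have hpd : p ∣ Nat.card G := Nat.dvd_of_mem_primeFactors hpmem
      by_cases hq' : ∃ r ∈ (Nat.card G).primeFactors, r ≠ p
      · obtain ⟨q, hqmem, hqp⟩ := hq'
        have hq : q.Prime := Nat.prime_of_mem_primeFactors hqmem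
        have hqd : q ∣ Nat.card G := Nat.dvd_of_mem_primeFactors hqmem
        have hall : ∀ r ∈ (Nat.card G).primeFactors, r = p ∨ r = q := by
          intro r hr
          by_contra hcon
          push_neg at hcon
          exact three_primes_claw h hp hq (Nat.prime_of_mem_primeFactors hr)
            (Ne.symm hqp) (fun e => hcon.1 e.symm) (fun e => hcon.2 e.symm)
            hpd hqd (Nat.dvd_of_mem_primeFactors hr)
        have hcard := eq_pow_mul_pow hp hq (Ne.symm hqp) hN hall
        refine ⟨p, q, _, _, hp, hq, Ne.symm hqp, ?_, hcyc, hcard⟩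
        by_contra hcon
        push_neg at hcon
        apply not_both_sq h hp hq (Ne.symm hqp)
        · exact dvd_trans (pow_dvd_pow p hcon.1) (Nat.ordProj_dvd _ _)
        · exact dvd_trans (pow_dvd_pow q hcon.2) (Nat.ordProj_dvd _ _)
      · push_neg at hq'
        set q : ℕ := if p = 2 then 3 else 2 with hqdef
        have hq : q.Prime := by
          rw [hqdef]
          split
          · exact Nat.prime_three
          · exact Nat.prime_two
        have hqp : p ≠ q := by
          rw [hqdef]
          split
          · omega
          · omega
        have hall : ∀ r ∈ (Nat.card G).primeFactors, r = p ∨ r = q :=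
          fun r hr => Or.inl (hq' r hr)
        have hcard := eq_pow_mul_pow hp hq hqp hN hall
        have hn0 : (Nat.card G).factorization q = 0 := by
          apply Nat.factorization_eq_zero_of_not_dvd
          intro hdvd
          exact hqp ((hq' q (Nat.mem_primeFactors.mpr ⟨hq, hdvd, hN⟩))).symm
        refine ⟨p, q, _, _, hp, hq, hqp, Or.inr (by omega), hcyc, hcard⟩
  · rintro ⟨p, q, m, n, hp, hq, hpq, hmn, hcyc, hcard⟩
    rcases hmn with hm | hn
    · exact clawfree_of_cyclic hp hq hpq hm hcard
    · exact clawfree_of_cyclic hq hp hpq.symm hn (by rw [hcard, mul_comm])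
end

section
/- If G is a non-cyclic finite group whose power graph P(G) is K_{1,4}-free, then G has exactly three maximal cyclic subgroups (cyclic subgroups that are maximal, under inclusion, among all cyclic subgroups of G). -/
/-- The power graph is `K_{1,4}`-free. -/
def pgK14Free (G : Type*) [Group G] : Prop :=
  ¬ ∃ a b₁ b₂ b₃ b₄ : G,
      b₁ ≠ b₂ ∧ b₁ ≠ b₃ ∧ b₁ ≠ b₄ ∧ b₂ ≠ b₃ ∧ b₂ ≠ b₄ ∧ b₃ ≠ b₄ ∧
      pgAdj a b₁ ∧ pgAdj a b₂ ∧ pgAdj a b₃ ∧ pgAdj a b₄ ∧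
      ¬ pgAdj b₁ b₂ ∧ ¬ pgAdj b₁ b₃ ∧ ¬ pgAdj b₁ b₄ ∧
      ¬ pgAdj b₂ b₃ ∧ ¬ pgAdj b₂ b₄ ∧ ¬ pgAdj b₃ b₄

lemma pg_zpowers_cyclic {G : Type*} [Group G] (x : G) : IsCyclic (Subgroup.zpowers x) := by
  constructor
  refine ⟨⟨x, Subgroup.mem_zpowers x⟩, fun y => ?_⟩
  obtain ⟨n, hn⟩ := Subgroup.mem_zpowers_iff.mp y.2
  exact Subgroup.mem_zpowers_iff.mpr ⟨n, Subtype.ext (by push_cast; exact hn)⟩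

lemma pg_gen {G : Type*} [Group G] (M : Subgroup G) (hM : IsCyclic M) :
    ∃ b : G, Subgroup.zpowers b = M := by
  obtain ⟨g, hg⟩ := hM.exists_generator
  refine ⟨(g : G), le_antisymm (Subgroup.zpowers_le.mpr g.2) (fun x hx => ?_)⟩
  obtain ⟨n, hn⟩ := Subgroup.mem_zpowers_iff.mp (hg ⟨x, hx⟩)
  exact Subgroup.mem_zpowers_iff.mpr ⟨n, by
    have := congrArg (Subtype.val) hn
    push_cast at this
    exact this⟩

lemma pg_exists_max {G : Type*} [Group G] [Finite G] (x : G) :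
    ∃ M : Subgroup G, (IsCyclic M ∧ ∀ K : Subgroup G, IsCyclic K → M ≤ K → M = K) ∧ x ∈ M := by
  set T : Set (Subgroup G) := {K | IsCyclic K ∧ x ∈ K} with hT
  have hne : T.Nonempty := ⟨Subgroup.zpowers x, pg_zpowers_cyclic x, Subgroup.mem_zpowers x⟩
  obtain ⟨M, hMT, hmax⟩ := Set.Finite.exists_maximalFor id T (Set.toFinite T) hne
  exact ⟨M, ⟨hMT.1, fun K hK hle => le_antisymm hle (hmax ⟨hK, hle hMT.2⟩ hle)⟩, hMT.2⟩

theorem k14free_three_maximal_cyclic {G : Type*} [Group G] [Finite G]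
    (hnc : ¬ IsCyclic G) (h : pgK14Free G) :
    {H : Subgroup G | IsCyclic H ∧
      ∀ K : Subgroup G, IsCyclic K → H ≤ K → H = K}.ncard = 3 := by
  set S : Set (Subgroup G) := {H : Subgroup G | IsCyclic H ∧
      ∀ K : Subgroup G, IsCyclic K → H ≤ K → H = K} with hS
  -- elements of S are proper
  have hproper : ∀ M ∈ S, M ≠ ⊤ := by
    rintro M hM rfl
    have : IsCyclic (⊤ : Subgroup G) := hM.1
    exact hnc (isCyclic_of_surjective Subgroup.topEquiv.toMonoidHom Subgroup.topEquiv.surjective)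
  -- elements of S are nontrivial
  have hnbot : ∀ M ∈ S, M ≠ ⊥ := by
    rintro M hM rfl
    have : ∀ x : G, x = 1 := by
      intro x
      have := hM.2 (Subgroup.zpowers x) (pg_zpowers_cyclic x) bot_le
      have hx : x ∈ (⊥ : Subgroup G) := this ▸ Subgroup.mem_zpowers x
      exact Subgroup.mem_bot.mp hx
    have : Subsingleton G := ⟨fun a b => by rw [this a, this b]⟩
    exact hnc isCyclic_of_subsingleton
  -- generators of distinct elements of S are non-adjacent
  have hnonadj : ∀ M ∈ S, ∀ N ∈ S, M ≠ N → ∀ b c : G,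
      Subgroup.zpowers b = M → Subgroup.zpowers c = N → ¬ pgAdj b c := by
    rintro M hM N hN hMN b c rfl rfl ⟨hne, hor⟩
    rcases hor with hbc | hcb
    · exact hMN (hM.2 _ hN.1 (Subgroup.zpowers_le.mpr hbc))
    · exact hMN ((hN.2 _ hM.1 (Subgroup.zpowers_le.mpr hcb)).symm)
  -- no four distinct elements of S
  have hfour : ∀ M₁ M₂ M₃ M₄ : Subgroup G, M₁ ∈ S → M₂ ∈ S → M₃ ∈ S → M₄ ∈ S →
      M₁ ≠ M₂ → M₁ ≠ M₃ → M₁ ≠ M₄ → M₂ ≠ M₃ → M₂ ≠ M₄ → M₃ ≠ M₄ → False := by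
    intro M₁ M₂ M₃ M₄ h1 h2 h3 h4 h12 h13 h14 h23 h24 h34
    obtain ⟨b₁, hb₁⟩ := pg_gen M₁ h1.1
    obtain ⟨b₂, hb₂⟩ := pg_gen M₂ h2.1
    obtain ⟨b₃, hb₃⟩ := pg_gen M₃ h3.1
    obtain ⟨b₄, hb₄⟩ := pg_gen M₄ h4.1
    have hbne : ∀ (M : Subgroup G), M ∈ S → ∀ b : G, Subgroup.zpowers b = M → b ≠ 1 := by
      rintro M hM b rfl rfl
      exact hnbot _ hM (Subgroup.zpowers_one_eq_bot)
    have adj : ∀ (M : Subgroup G), M ∈ S → ∀ b : G, Subgroup.zpowers b = M → pgAdj 1 b :=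
      fun M hM b hb => ⟨(hbne M hM b hb).symm, Or.inl (Subgroup.one_mem _)⟩
    have ne12 : b₁ ≠ b₂ := fun e => h12 (by rw [← hb₁, ← hb₂, e])
    have ne13 : b₁ ≠ b₃ := fun e => h13 (by rw [← hb₁, ← hb₃, e])
    have ne14 : b₁ ≠ b₄ := fun e => h14 (by rw [← hb₁, ← hb₄, e])
    have ne23 : b₂ ≠ b₃ := fun e => h23 (by rw [← hb₂, ← hb₃, e])
    have ne24 : b₂ ≠ b₄ := fun e => h24 (by rw [← hb₂, ← hb₄, e])
    have ne34 : b₃ ≠ b₄ := fun e => h34 (by rw [← hb₃, ← hb₄, e])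
    exact h ⟨1, b₁, b₂, b₃, b₄, ne12, ne13, ne14, ne23, ne24, ne34,
      adj M₁ h1 b₁ hb₁, adj M₂ h2 b₂ hb₂, adj M₃ h3 b₃ hb₃, adj M₄ h4 b₄ hb₄,
      hnonadj M₁ h1 M₂ h2 h12 b₁ b₂ hb₁ hb₂, hnonadj M₁ h1 M₃ h3 h13 b₁ b₃ hb₁ hb₃,
      hnonadj M₁ h1 M₄ h4 h14 b₁ b₄ hb₁ hb₄, hnonadj M₂ h2 M₃ h3 h23 b₂ b₃ hb₂ hb₃,
      hnonadj M₂ h2 M₄ h4 h24 b₂ b₄ hb₂ hb₄, hnonadj M₃ h3 M₄ h4 h34 b₃ b₄ hb₃ hb₄⟩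
  -- get an element outside a proper subgroup
  have hout : ∀ M : Subgroup G, M ≠ ⊤ → ∃ x : G, x ∉ M := by
    intro M hM
    by_contra hc
    push_neg at hc
    exact hM ((Subgroup.eq_top_iff' M).mpr hc)
  -- three distinct elements of S
  obtain ⟨M₁, hM₁, -⟩ := pg_exists_max (1 : G)
  obtain ⟨x, hx⟩ := hout M₁ (hproper M₁ hM₁)
  obtain ⟨M₂, hM₂, hxM₂⟩ := pg_exists_max x
  have h12 : M₁ ≠ M₂ := fun e => hx (e ▸ hxM₂)
  -- a group is not the union of two proper subgroups
  obtain ⟨y, hy⟩ := hout M₂ (hproper M₂ hM₂)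
  have : ∃ z : G, z ∉ M₁ ∧ z ∉ M₂ := by
    by_cases hxy : x ∉ M₂ ∧ True
    · exact ⟨x, hx, fun c => hxy.1 c⟩
    · push_neg at hxy
      by_cases hy1 : y ∉ M₁
      · exact ⟨y, hy1, hy⟩
      · push_neg at hy1
        refine ⟨x * y, fun hc => hx ?_, fun hc => hy ?_⟩
        · have : x = (x * y) * y⁻¹ := by group
          rw [this]; exact M₁.mul_mem hc (M₁.inv_mem hy1)
        · have : y = x⁻¹ * (x * y) := by group
          rw [this]; exact M₂.mul_mem (M₂.inv_mem hxM₂) hc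
  obtain ⟨z, hz1, hz2⟩ := this
  obtain ⟨M₃, hM₃, hzM₃⟩ := pg_exists_max z
  have h13 : M₁ ≠ M₃ := fun e => hz1 (e ▸ hzM₃)
  have h23 : M₂ ≠ M₃ := fun e => hz2 (e ▸ hzM₃)
  have hSeq : S = {M₁, M₂, M₃} := by
    apply Set.eq_of_subset_of_subset
    · intro K hK
      by_contra hKmem
      simp only [Set.mem_insert_iff, Set.mem_singleton_iff] at hKmem
      push_neg at hKmem
      exact hfour M₁ M₂ M₃ K hM₁ hM₂ hM₃ hK h12 h13 (Ne.symm hKmem.1) h23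
        (Ne.symm hKmem.2.1) (Ne.symm hKmem.2.2)
    · rintro K (rfl | rfl | rfl)
      exacts [hM₁, hM₂, hM₃]
  rw [hSeq]
  exact Set.ncard_eq_three.mpr ⟨M₁, M₂, M₃, h12, h13, h23, rfl⟩
end

section
/- Let G be a finite group. Then the power graph P(G) contains an induced 4-cycle if and only if there exist nontrivial elements x, y ∈ G such that ⟨x⟩ is not contained in ⟨y⟩, ⟨y⟩ is not contained in ⟨x⟩, and the order of ⟨x⟩ ∩ ⟨y⟩ is divisible by at least two distinct primes. -/
/-- The power graph contains an induced 4-cycle. -/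
def pgHasInducedC4 (G : Type*) [Group G] : Prop :=
  ∃ x u y v : G,
    x ≠ u ∧ x ≠ y ∧ x ≠ v ∧ u ≠ y ∧ u ≠ v ∧ y ≠ v ∧
    pgAdj x u ∧ pgAdj u y ∧ pgAdj y v ∧ pgAdj v x ∧
    ¬ pgAdj x y ∧ ¬ pgAdj u v

open Subgroup

/-- In a finite group, if `a` and `b` lie in a common cyclic subgroup and the order of `a`
divides the order of `b`, then `a` is a power of `b`. -/
lemma aux_mem_zpowers_of_orderOf_dvd {G : Type*} [Group G] [Finite G] {c a b : G}
    (ha : a ∈ zpowers c) (hb : b ∈ zpowers c)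
    (hdvd : orderOf a ∣ orderOf b) : a ∈ zpowers b := by
  obtain ⟨m, rfl⟩ := (Submonoid.mem_powers_iff _ _).mp (mem_powers_iff_mem_zpowers.mpr ha)
  obtain ⟨k, rfl⟩ := (Submonoid.mem_powers_iff _ _).mp (mem_powers_iff_mem_zpowers.mpr hb)
  set n := orderOf c with hn
  have hn0 : 0 < n := (isOfFinOrder_of_finite c).orderOf_pos
  have hoa : orderOf (c ^ m) = n / Nat.gcd n m := orderOf_pow c
  have hob : orderOf (c ^ k) = n / Nat.gcd n k := orderOf_pow c
  set gm := Nat.gcd n m with hgm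
  set gk := Nat.gcd n k with hgk
  have hgmn : gm ∣ n := Nat.gcd_dvd_left n m
  have hgkn : gk ∣ n := Nat.gcd_dvd_left n k
  -- from `n / gm ∣ n / gk` deduce `gk ∣ gm`
  have hdvd' : n / gm ∣ n / gk := by rwa [hoa, hob] at hdvd
  have hkm : gk ∣ gm := by
    have h1 : gk = n / (n / gk) := (Nat.div_div_self hgkn hn0.ne').symm
    rw [h1]
    rw [Nat.div_dvd_iff_dvd_mul (Nat.div_dvd_of_dvd hgkn)
      (Nat.pos_of_dvd_of_pos (Nat.div_dvd_of_dvd hgkn) hn0 |> (fun h => h))]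
    · obtain ⟨t, ht⟩ := hdvd'
      refine ⟨t, ?_⟩
      rw [ht, mul_right_comm, Nat.div_mul_cancel hgmn]
  have hgm_m : gm ∣ m := Nat.gcd_dvd_right n m
  have hgk_m : gk ∣ m := hkm.trans hgm_m
  -- `c ^ gk ∈ zpowers (c ^ k)`
  have hmem : c ^ gk ∈ zpowers (c ^ k) := by
    have hgcd : (gk : ℤ) = (n : ℤ) * Int.gcdA n k + (k : ℤ) * Int.gcdB n k := by
      have := Int.gcd_eq_gcd_ab (n : ℤ) (k : ℤ)
      simpa [hgk, Int.gcd_natCast_natCast] using this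
    have : c ^ (gk : ℤ) = (c ^ k) ^ Int.gcdB n k := by
      rw [hgcd, zpow_add, zpow_mul, zpow_mul, zpow_natCast, zpow_natCast,
        pow_orderOf_eq_one, one_zpow, one_mul]
    rw [← zpow_natCast c gk, this]
    exact zpow_mem (mem_zpowers _) _
  have : c ^ m = (c ^ gk) ^ (m / gk) := by
    rw [← pow_mul, Nat.mul_div_cancel' hgk_m]
  rw [this]
  exact pow_mem hmem _

/-- Two elements of a common cyclic subgroup that are nontrivial and mutually not powers of
each other force two distinct primes among the prime divisors of their orders. -/
lemma aux_two_primes {G : Type*} [Group G] [Finite G] {c a b : G}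
    (ha : a ∈ zpowers c) (hb : b ∈ zpowers c) (ha1 : a ≠ 1)
    (hab : a ∉ zpowers b) (hba : b ∉ zpowers a) :
    ∃ p q : ℕ, p.Prime ∧ q.Prime ∧ p ≠ q ∧ (p ∣ orderOf a ∨ p ∣ orderOf b) ∧
      (q ∣ orderOf a ∨ q ∣ orderOf b) := by
  by_contra hcon
  push_neg at hcon
  have hoa1 : orderOf a ≠ 1 := fun h' => ha1 (orderOf_eq_one_iff.mp h')
  have hoa0 : orderOf a ≠ 0 := (isOfFinOrder_of_finite a).orderOf_pos.ne'
  have hob0 : orderOf b ≠ 0 := (isOfFinOrder_of_finite b).orderOf_pos.ne'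
  set p := (orderOf a).minFac with hpdef
  have hp : p.Prime := Nat.minFac_prime hoa1
  have key : ∀ r : ℕ, r.Prime → (r ∣ orderOf a ∨ r ∣ orderOf b) → r = p := by
    intro r hr hrd
    by_contra hne
    exact (hcon r p hr hp hne hrd).1 (Nat.minFac_dvd _)
  have hha : orderOf a = p ^ (orderOf a).primeFactorsList.length :=
    Nat.eq_prime_pow_of_unique_prime_dvd hoa0 (fun hd hdvd => key _ hd (Or.inl hdvd))
  have hhb : orderOf b = p ^ (orderOf b).primeFactorsList.length :=
    Nat.eq_prime_pow_of_unique_prime_dvd hob0 (fun hd hdvd => key _ hd (Or.inr hdvd))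
  rcases Nat.le_total (orderOf a).primeFactorsList.length (orderOf b).primeFactorsList.length
    with hle | hle
  · exact hab (aux_mem_zpowers_of_orderOf_dvd ha hb
      (by rw [hha, hhb]; exact pow_dvd_pow p hle))
  · exact hba (aux_mem_zpowers_of_orderOf_dvd hb ha
      (by rw [hha, hhb]; exact pow_dvd_pow p hle))

lemma aux_ord_dvd_card {G : Type*} [Group G] [Finite G] {a : G} {H : Subgroup G}
    (h : a ∈ H) : orderOf a ∣ Nat.card H := by
  rw [← Nat.card_zpowers]
  exact Subgroup.card_dvd_of_le (zpowers_le_of_mem h)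

theorem hasInducedC4_iff {G : Type*} [Group G] [Finite G] :
    pgHasInducedC4 G ↔
      ∃ x y : G, x ≠ 1 ∧ y ≠ 1 ∧
        ¬ Subgroup.zpowers x ≤ Subgroup.zpowers y ∧
        ¬ Subgroup.zpowers y ≤ Subgroup.zpowers x ∧
        ∃ p q : ℕ, p.Prime ∧ q.Prime ∧ p ≠ q ∧
          p ∣ Nat.card (Subgroup.zpowers x ⊓ Subgroup.zpowers y : Subgroup G) ∧
          q ∣ Nat.card (Subgroup.zpowers x ⊓ Subgroup.zpowers y : Subgroup G) := by
  constructor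
  · rintro ⟨x, u, y, v, hxu, hxy, hxv, huy, huv, hyv,
      ⟨-, axu⟩, ⟨-, auy⟩, ⟨-, ayv⟩, ⟨-, avx⟩, nxy, nuv⟩
    have hx_ny : x ∉ zpowers y := fun h => nxy ⟨hxy, Or.inl h⟩
    have hy_nx : y ∉ zpowers x := fun h => nxy ⟨hxy, Or.inr h⟩
    have hu_nv : u ∉ zpowers v := fun h => nuv ⟨huv, Or.inl h⟩
    have hv_nu : v ∉ zpowers u := fun h => nuv ⟨huv, Or.inr h⟩
    have hx1 : x ≠ 1 := fun h => hx_ny (h ▸ one_mem _)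
    have hy1 : y ≠ 1 := fun h => hy_nx (h ▸ one_mem _)
    have hu1 : u ≠ 1 := fun h => hu_nv (h ▸ one_mem _)
    have hv1 : v ≠ 1 := fun h => hv_nu (h ▸ one_mem _)
    have hu : (u ∈ zpowers x ∧ u ∈ zpowers y) ∨ (x ∈ zpowers u ∧ y ∈ zpowers u) := by
      rcases axu with h1 | h1 <;> rcases auy with h2 | h2
      · exact absurd (zpowers_le_of_mem h2 h1) hx_ny
      · exact Or.inr ⟨h1, h2⟩
      · exact Or.inl ⟨h1, h2⟩
      · exact absurd (zpowers_le_of_mem h1 h2) hy_nx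
    have hv : (v ∈ zpowers x ∧ v ∈ zpowers y) ∨ (x ∈ zpowers v ∧ y ∈ zpowers v) := by
      rcases ayv with h1 | h1 <;> rcases avx with h2 | h2
      · exact absurd (zpowers_le_of_mem h2 h1) hy_nx
      · exact Or.inr ⟨h2, h1⟩
      · exact Or.inl ⟨h2, h1⟩
      · exact absurd (zpowers_le_of_mem h1 h2) hx_ny
    rcases hu with hu | hu <;> rcases hv with hv | hv
    · -- both below: witnesses x, y
      obtain ⟨p, q, hp, hq, hpq, hpd, hqd⟩ :=
        aux_two_primes (c := x) hu.1 hv.1 hu1 hu_nv hv_nu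
      have hule : orderOf u ∣ Nat.card (zpowers x ⊓ zpowers y : Subgroup G) :=
        aux_ord_dvd_card (Subgroup.mem_inf.mpr hu)
      have hvle : orderOf v ∣ Nat.card (zpowers x ⊓ zpowers y : Subgroup G) :=
        aux_ord_dvd_card (Subgroup.mem_inf.mpr hv)
      exact ⟨x, y, hx1, hy1,
        fun h => hx_ny (h (mem_zpowers x)), fun h => hy_nx (h (mem_zpowers y)),
        p, q, hp, hq, hpq,
        hpd.elim (fun h => h.trans hule) (fun h => h.trans hvle),
        hqd.elim (fun h => h.trans hule) (fun h => h.trans hvle)⟩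
    · exact absurd (zpowers_le_of_mem hv.1 hu.1) hu_nv
    · exact absurd (zpowers_le_of_mem hu.1 hv.1) hv_nu
    · -- both above: witnesses u, v
      obtain ⟨p, q, hp, hq, hpq, hpd, hqd⟩ :=
        aux_two_primes (c := u) hu.1 hu.2 hx1 hx_ny hy_nx
      have hxle : orderOf x ∣ Nat.card (zpowers u ⊓ zpowers v : Subgroup G) :=
        aux_ord_dvd_card (Subgroup.mem_inf.mpr ⟨hu.1, hv.1⟩)
      have hyle : orderOf y ∣ Nat.card (zpowers u ⊓ zpowers v : Subgroup G) :=
        aux_ord_dvd_card (Subgroup.mem_inf.mpr ⟨hu.2, hv.2⟩)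
      exact ⟨u, v, hu1, hv1,
        fun h => hu_nv (h (mem_zpowers u)), fun h => hv_nu (h (mem_zpowers v)),
        p, q, hp, hq, hpq,
        hpd.elim (fun h => h.trans hxle) (fun h => h.trans hyle),
        hqd.elim (fun h => h.trans hxle) (fun h => h.trans hyle)⟩
  · rintro ⟨x, y, hx1, hy1, hxy, hyx, p, q, hp, hq, hpq, hpd, hqd⟩
    haveI := Fact.mk hp
    haveI := Fact.mk hq
    obtain ⟨u', hu'⟩ := exists_prime_orderOf_dvd_card'
      (G := (zpowers x ⊓ zpowers y : Subgroup G)) p hpd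
    obtain ⟨v', hv'⟩ := exists_prime_orderOf_dvd_card'
      (G := (zpowers x ⊓ zpowers y : Subgroup G)) q hqd
    set u : G := (u' : G) with hudef
    set v : G := (v' : G) with hvdef
    have hup : orderOf u = p := (Subgroup.orderOf_coe u').trans hu'
    have hvq : orderOf v = q := (Subgroup.orderOf_coe v').trans hv'
    have hu_x : u ∈ zpowers x := (Subgroup.mem_inf.mp u'.2).1
    have hu_y : u ∈ zpowers y := (Subgroup.mem_inf.mp u'.2).2
    have hv_x : v ∈ zpowers x := (Subgroup.mem_inf.mp v'.2).1
    have hv_y : v ∈ zpowers y := (Subgroup.mem_inf.mp v'.2).2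
    have hx_ny : x ∉ zpowers y := fun h => hxy (zpowers_le_of_mem h)
    have hy_nx : y ∉ zpowers x := fun h => hyx (zpowers_le_of_mem h)
    have hxu : x ≠ u := by intro h; exact hx_ny (h ▸ hu_y)
    have hxy' : x ≠ y := by intro h; exact hx_ny (h ▸ mem_zpowers y)
    have hxv : x ≠ v := by intro h; exact hx_ny (h ▸ hv_y)
    have huy : u ≠ y := by intro h; exact hy_nx (h ▸ hu_x)
    have huv : u ≠ v := by
      intro h; exact hpq (by rw [← hup, ← hvq, h])
    have hyv : y ≠ v := by intro h; exact hy_nx (h ▸ hv_x)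
    refine ⟨x, u, y, v, hxu, hxy', hxv, huy, huv, hyv,
      ⟨hxu, Or.inr hu_x⟩, ⟨huy, Or.inl hu_y⟩, ⟨hyv, Or.inr hv_y⟩,
      ⟨hxv.symm, Or.inl hv_x⟩, fun h => h.2.elim hx_ny hy_nx, fun h => ?_⟩
    refine h.2.elim (fun hm => hpq ?_) (fun hm => hpq ?_)
    · exact (Nat.prime_dvd_prime_iff_eq hp hq).mp
        (by rw [← hup, ← hvq]; exact orderOf_dvd_of_mem_zpowers hm)
    · exact ((Nat.prime_dvd_prime_iff_eq hq hp).mp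
        (by rw [← hup, ← hvq]; exact orderOf_dvd_of_mem_zpowers hm)).symm
end

section
/- Let G be a finite group in which every nontrivial element has prime power order. Then the power graph P(G) is C_4-free, i.e. contains no induced 4-cycle. -/
/-- The power graph is `C₄`-free. -/
def pgC4Free (G : Type*) [Group G] : Prop := ¬ pgHasInducedC4 G

/-- In a finite group, if `a` and `b` are powers of `c` and the order of `a`
divides the order of `b`, then `a` is a power of `b`. -/
lemma aux_mem_zpowers_of_dvd {G : Type*} [Group G] [Finite G] {a b c : G}
    (ha : a ∈ Subgroup.zpowers c) (hb : b ∈ Subgroup.zpowers c)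
    (hdvd : orderOf a ∣ orderOf b) : a ∈ Subgroup.zpowers b := by
  rw [← mem_powers_iff_mem_zpowers] at ha hb
  obtain ⟨i, rfl⟩ := ha
  obtain ⟨j, rfl⟩ := hb
  set n := orderOf c with hn
  have hnpos : 0 < n := (isOfFinOrder_of_finite c).orderOf_pos
  rw [orderOf_pow, orderOf_pow, ← hn] at hdvd
  set d := Nat.gcd n i with hd
  set e := Nat.gcd n j with he
  have hdn : d ∣ n := Nat.gcd_dvd_left n i
  have hen : e ∣ n := Nat.gcd_dvd_left n j
  have hdi : d ∣ i := Nat.gcd_dvd_right n i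
  -- from n/d ∣ n/e deduce e ∣ d
  obtain ⟨k, hk⟩ := hdvd
  have hndpos : 0 < n / d := Nat.div_pos (Nat.le_of_dvd hnpos hdn) (Nat.pos_of_dvd_of_pos hdn hnpos)
  have hed : e ∣ d := by
    refine ⟨k, ?_⟩
    have h1 : n = d * (n / d) := (Nat.div_mul_cancel hdn).symm ▸ (Nat.mul_div_cancel' hdn).symm
    have h2 : n = e * (n / e) := (Nat.mul_div_cancel' hen).symm
    rw [hk] at h2
    have h3 : d * (n / d) = e * k * (n / d) := by
      calc d * (n / d) = n := Nat.mul_div_cancel' hdn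
        _ = e * (n / d * k) := h2
        _ = e * k * (n / d) := by ring
    exact Nat.eq_of_mul_eq_mul_right hndpos h3
  -- c^e ∈ zpowers (c^j)
  have hce : c ^ e ∈ Subgroup.zpowers (c ^ j) := by
    have hbez := Nat.gcd_eq_gcd_ab n j
    have this1 : (c : G) ^ (e : ℤ) = c ^ ((n : ℤ) * Nat.gcdA n j + (j : ℤ) * Nat.gcdB n j) := by
      rw [← hbez]
    rw [zpow_add, zpow_mul, zpow_mul, zpow_natCast, zpow_natCast, pow_orderOf_eq_one,
      one_zpow, one_mul, zpow_natCast] at this1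
    exact Subgroup.mem_zpowers_iff.mpr ⟨Nat.gcdB n j, this1.symm⟩
  -- a = (c^e)^(something)
  have hae : c ^ i ∈ Subgroup.zpowers (c ^ e) := by
    have : c ^ i = (c ^ e) ^ (d / e * (i / d)) := by
      rw [← pow_mul, ← mul_assoc, Nat.mul_div_cancel' hed, Nat.mul_div_cancel' hdi]
    exact this ▸ Subgroup.npow_mem_zpowers _ _
  exact Subgroup.zpowers_le.mpr hce hae

/-- Chain lemma: if all nontrivial elements have prime power order and
`a, b` are powers of `c ≠ 1`, then `a` and `b` are comparable. -/
lemma aux_chain {G : Type*} [Group G] [Finite G]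
    (h : ∀ x : G, x ≠ 1 → IsPrimePow (orderOf x)) {a b c : G} (hc : c ≠ 1)
    (ha : a ∈ Subgroup.zpowers c) (hb : b ∈ Subgroup.zpowers c) :
    a ∈ Subgroup.zpowers b ∨ b ∈ Subgroup.zpowers a := by
  rcases eq_or_ne a 1 with rfl | ha1
  · exact Or.inl (Subgroup.one_mem _)
  rcases eq_or_ne b 1 with rfl | hb1
  · exact Or.inr (Subgroup.one_mem _)
  obtain ⟨p, k, hp, hk, hpk⟩ := h c hc
  have hda : orderOf a ∣ p ^ k := hpk ▸ orderOf_dvd_of_mem_zpowers ha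
  have hdb : orderOf b ∣ p ^ k := hpk ▸ orderOf_dvd_of_mem_zpowers hb
  obtain ⟨s, hs, hsa⟩ := (Nat.dvd_prime_pow hp.nat_prime).mp hda
  obtain ⟨t, ht, htb⟩ := (Nat.dvd_prime_pow hp.nat_prime).mp hdb
  rcases le_total s t with hst | hts
  · exact Or.inl (aux_mem_zpowers_of_dvd ha hb
      (by rw [hsa, htb]; exact pow_dvd_pow p hst))
  · exact Or.inr (aux_mem_zpowers_of_dvd hb ha
      (by rw [hsa, htb]; exact pow_dvd_pow p hts))

theorem c4free_of_prime_power_orders {G : Type*} [Group G] [Finite G]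
    (h : ∀ x : G, x ≠ 1 → IsPrimePow (orderOf x)) :
    pgC4Free G := by
  rintro ⟨x, u, y, v, hxu, hxy, hxv, huy, huv, hyv,
    ⟨_, exu⟩, ⟨_, euy⟩, ⟨_, eyv⟩, ⟨_, evx⟩, nxy, nuv⟩
  -- none of the vertices is 1
  have hx1 : x ≠ 1 := fun hx => nxy ⟨hxy, Or.inl (hx ▸ Subgroup.one_mem _)⟩
  have hy1 : y ≠ 1 := fun hy => nxy ⟨hxy, Or.inr (hy ▸ Subgroup.one_mem _)⟩
  have hu1 : u ≠ 1 := fun hu => nuv ⟨huv, Or.inl (hu ▸ Subgroup.one_mem _)⟩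
  have hv1 : v ≠ 1 := fun hv => nuv ⟨huv, Or.inr (hv ▸ Subgroup.one_mem _)⟩
  -- chain constraints
  have cu : ¬ (x ∈ Subgroup.zpowers u ∧ y ∈ Subgroup.zpowers u) := by
    rintro ⟨h1, h2⟩
    exact nxy ⟨hxy, aux_chain h hu1 h1 h2⟩
  have cv : ¬ (x ∈ Subgroup.zpowers v ∧ y ∈ Subgroup.zpowers v) := by
    rintro ⟨h1, h2⟩
    exact nxy ⟨hxy, aux_chain h hv1 h1 h2⟩
  have cx : ¬ (u ∈ Subgroup.zpowers x ∧ v ∈ Subgroup.zpowers x) := by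
    rintro ⟨h1, h2⟩
    exact nuv ⟨huv, aux_chain h hx1 h1 h2⟩
  have cy : ¬ (u ∈ Subgroup.zpowers y ∧ v ∈ Subgroup.zpowers y) := by
    rintro ⟨h1, h2⟩
    exact nuv ⟨huv, aux_chain h hy1 h1 h2⟩
  rcases exu with hxu' | hux'
  · -- x ∈ ⟨u⟩
    have huy' : u ∈ Subgroup.zpowers y := by
      rcases euy with h1 | h2
      · exact h1
      · exact absurd ⟨hxu', h2⟩ cu
    have hyv' : y ∈ Subgroup.zpowers v := by
      rcases eyv with h1 | h2
      · exact h1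
      · exact absurd ⟨huy', h2⟩ cy
    have hvx' : v ∈ Subgroup.zpowers x := by
      rcases evx with h1 | h2
      · exact h1
      · exact absurd ⟨h2, hyv'⟩ cv
    -- v ∈ ⟨x⟩ ⊆ ⟨u⟩ ⊆ ⟨y⟩ contradicts cy with u ∈ ⟨y⟩
    have : v ∈ Subgroup.zpowers y :=
      Subgroup.zpowers_le.mpr huy' (Subgroup.zpowers_le.mpr hxu' hvx')
    exact cy ⟨huy', this⟩
  · -- u ∈ ⟨x⟩
    have hxv' : x ∈ Subgroup.zpowers v := by
      rcases evx with h1 | h2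
      · exact absurd ⟨hux', h1⟩ cx
      · exact h2
    have hvy' : v ∈ Subgroup.zpowers y := by
      rcases eyv with h1 | h2
      · exact absurd ⟨hxv', h1⟩ cv
      · exact h2
    have hyu' : y ∈ Subgroup.zpowers u := by
      rcases euy with h1 | h2
      · exact absurd ⟨h1, hvy'⟩ cy
      · exact h2
    -- y ∈ ⟨u⟩ ⊆ ⟨x⟩ ⊆ ⟨v⟩ contradicts cv with x ∈ ⟨v⟩
    have : y ∈ Subgroup.zpowers v :=
      Subgroup.zpowers_le.mpr hxv' (Subgroup.zpowers_le.mpr hux' hyu')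
    exact cv ⟨hxv', this⟩
end

section
/- Let G be a finite group whose power graph P(G) is C_4-free. Then every nontrivial element x ∈ G has order of the form p^m, p^m q, or pqr, where p, q, r are distinct primes and m is a positive integer. -/
section Helpers

variable {G : Type*} [Group G] [Finite G]

private lemma pgAux_mem (x : G) (hn0 : orderOf x ≠ 0) {c a : ℕ} (hc : c ∣ a)
    (ha : a ∣ orderOf x) :
    x ^ (orderOf x / c) ∈ Subgroup.zpowers (x ^ (orderOf x / a)) := by
  obtain ⟨t, rfl⟩ := hc
  obtain ⟨s, hs⟩ := ha
  have hct : c * t ≠ 0 := by rintro h; rw [h, zero_mul] at hs; exact hn0 hs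
  have hc0 : 0 < c := Nat.pos_of_ne_zero (by rintro rfl; simp at hct)
  have h1 : orderOf x / (c * t) = s := by
    rw [hs]; exact Nat.mul_div_cancel_left s (Nat.pos_of_ne_zero hct)
  have h2 : orderOf x / c = t * s := by
    rw [hs, mul_assoc]; exact Nat.mul_div_cancel_left _ hc0
  refine Subgroup.mem_zpowers_iff.mpr ⟨(t : ℤ), ?_⟩
  rw [h1, h2, zpow_natCast, ← pow_mul, mul_comm]

private lemma pgAux_orderOf (x : G) (hn0 : orderOf x ≠ 0) {d : ℕ} (hd : d ∣ orderOf x) :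
    orderOf (x ^ (orderOf x / d)) = d := by
  rw [orderOf_pow, Nat.gcd_eq_right (Nat.div_dvd_of_dvd hd), Nat.div_div_self hd hn0]

/-- The key construction: if `n = orderOf x` has divisors `a`, `b`, both divisible by the
two distinct primes `p`, `q`, with `a`, `b` incomparable under divisibility, then the
power graph contains an induced 4-cycle, contradicting C₄-freeness. -/
private lemma pgKey (h : pgC4Free G) (x : G) {p q a b : ℕ} (hp : p.Prime) (hq : q.Prime)
    (hpq : p ≠ q) (hpa : p ∣ a) (hqa : q ∣ a) (hpb : p ∣ b) (hqb : q ∣ b)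
    (han : a ∣ orderOf x) (hbn : b ∣ orderOf x) (hab : ¬ a ∣ b) (hba : ¬ b ∣ a) : False := by
  have hn0 : orderOf x ≠ 0 := (orderOf_pos x).ne'
  set n := orderOf x with hn
  set e : ℕ → G := fun d => x ^ (n / d) with he
  have hord : ∀ d, d ∣ n → orderOf (e d) = d := fun d hd => pgAux_orderOf x hn0 hd
  have hpn : p ∣ n := hpa.trans han
  have hqn : q ∣ n := hqa.trans han
  have hne : ∀ {c d : ℕ}, c ∣ n → d ∣ n → c ≠ d → e c ≠ e d := by
    intro c d hc hd hcd heq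
    exact hcd (by rw [← hord c hc, ← hord d hd, heq])
  have hqp : ¬ q ∣ p := fun hd => hpq ((Nat.prime_dvd_prime_iff_eq hq hp).mp hd).symm
  have hpq' : ¬ p ∣ q := fun hd => hpq ((Nat.prime_dvd_prime_iff_eq hp hq).mp hd)
  have hpa' : p ≠ a := fun h' => hqp (h' ▸ hqa)
  have hqa' : q ≠ a := fun h' => hpq' (h' ▸ hpa)
  have hpb' : p ≠ b := fun h' => hqp (h' ▸ hqb)
  have hqb' : q ≠ b := fun h' => hpq' (h' ▸ hpb)
  have hab' : a ≠ b := fun h' => hab (h' ▸ dvd_refl a)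
  have hnadj : ∀ {c d : ℕ}, c ∣ n → d ∣ n → ¬ c ∣ d → ¬ d ∣ c → ¬ pgAdj (e c) (e d) := by
    rintro c d hc hd hcd hdc ⟨-, h' | h'⟩
    · exact hcd (by
        have := orderOf_dvd_of_mem_zpowers h'
        rwa [hord c hc, hord d hd] at this)
    · exact hdc (by
        have := orderOf_dvd_of_mem_zpowers h'
        rwa [hord c hc, hord d hd] at this)
  refine h ⟨e a, e p, e b, e q, hne han hpn (Ne.symm hpa'), hne han hbn hab',
    hne han hqn (Ne.symm hqa'), hne hpn hbn hpb', hne hpn hqn hpq, hne hbn hqn (Ne.symm hqb'),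
    ⟨hne han hpn (Ne.symm hpa'), Or.inr (pgAux_mem x hn0 hpa han)⟩,
    ⟨hne hpn hbn hpb', Or.inl (pgAux_mem x hn0 hpb hbn)⟩,
    ⟨hne hbn hqn (Ne.symm hqb'), Or.inr (pgAux_mem x hn0 hqb hbn)⟩,
    ⟨hne hqn han hqa', Or.inl (pgAux_mem x hn0 hqa han)⟩,
    hnadj han hbn hab hba, hnadj hpn hqn hpq' hqp⟩

/-- Specialization: three distinct primes `p`, `q`, `r` dividing `n` with `p² ∣ n`
give an induced 4-cycle. -/
private lemma pgKey3 (h : pgC4Free G) (x : G) {p q r : ℕ} (hp : p.Prime) (hq : q.Prime)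
    (hr : r.Prime) (hpq : p ≠ q) (hpr : p ≠ r) (hqr : q ≠ r)
    (hp2 : p ^ 2 ∣ orderOf x) (hqn : q ∣ orderOf x) (hrn : r ∣ orderOf x) : False := by
  have cpq : Nat.Coprime p q := (Nat.coprime_primes hp hq).mpr hpq
  have cpr : Nat.Coprime p r := (Nat.coprime_primes hp hr).mpr hpr
  have cqr : Nat.Coprime q r := (Nat.coprime_primes hq hr).mpr hqr
  refine pgKey h x hp hq hpq
    (a := p ^ 2 * q) (b := p * (q * r))
    (dvd_mul_of_dvd_left (dvd_pow_self p two_ne_zero) q)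
    (dvd_mul_left q (p ^ 2))
    (dvd_mul_right p (q * r))
    (dvd_mul_of_dvd_right (dvd_mul_right q r) p)
    ((Nat.Coprime.pow_left 2 cpq).mul_dvd_of_dvd_of_dvd hp2 hqn)
    ((cpq.mul_right cpr).mul_dvd_of_dvd_of_dvd ((dvd_pow_self p two_ne_zero).trans hp2)
      (cqr.mul_dvd_of_dvd_of_dvd hqn hrn))
    ?_ ?_
  · intro hd
    have h1 : p ^ 2 ∣ p * (q * r) := (dvd_mul_right (p ^ 2) q).trans hd
    have h2 : p ^ 2 ∣ p :=
      ((cpq.mul_right cpr).pow_left 2).dvd_of_dvd_mul_right h1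
    have := Nat.le_of_dvd hp.pos h2
    nlinarith [hp.two_le]
  · intro hd
    have h1 : r ∣ p ^ 2 * q :=
      ((dvd_mul_left r q).trans (dvd_mul_left (q * r) p)).trans hd
    have crpq : Nat.Coprime r (p ^ 2 * q) :=
      ((cpr.symm.pow_right 2).mul_right cqr.symm)
    have := Nat.Coprime.eq_one_of_dvd crpq h1
    exact hr.one_lt.ne' this

end Helpers

theorem element_orders_of_c4free {G : Type*} [Group G] [Finite G]
    (h : pgC4Free G) (x : G) (hx : x ≠ 1) :
    ∃ p q r m : ℕ, p.Prime ∧ q.Prime ∧ r.Prime ∧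
      p ≠ q ∧ p ≠ r ∧ q ≠ r ∧ 0 < m ∧
      (orderOf x = p ^ m ∨ orderOf x = p ^ m * q ∨ orderOf x = p * q * r) := by
  classical
  have hn0 : orderOf x ≠ 0 := (orderOf_pos x).ne'
  have hn1 : orderOf x ≠ 1 := fun h' => hx (orderOf_eq_one_iff.mp h')
  set n := orderOf x with hn
  set S := n.primeFactors with hS
  have hprod : ∏ p ∈ S, p ^ n.factorization p = n := by
    have := Nat.factorization_prod_pow_eq_self hn0
    rwa [Finsupp.prod, Nat.support_factorization] at this
  have hmem : ∀ p ∈ S, p.Prime ∧ p ∣ n := by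
    intro p hp
    have := Nat.mem_primeFactors.mp hp
    exact ⟨this.1, this.2.1⟩
  have hfpos : ∀ p ∈ S, 0 < n.factorization p := by
    intro p hp
    have : p ∈ n.factorization.support := by rwa [Nat.support_factorization]
    exact Nat.pos_of_ne_zero (Finsupp.mem_support_iff.mp this)
  rcases Nat.lt_or_ge S.card 4 with hlt | hge
  · have hc : S.card = 0 ∨ S.card = 1 ∨ S.card = 2 ∨ S.card = 3 := by omega
    rcases hc with hc | hc | hc | hc
    · -- no prime factors: n = 1, contradiction
      rw [Finset.card_eq_zero] at hc
      rcases Nat.primeFactors_eq_empty.mp hc with h' | h'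
      · exact absurd h' hn0
      · exact absurd h' hn1
    · -- n = p ^ m
      obtain ⟨p, hSp⟩ := Finset.card_eq_one.mp hc
      have hpS : p ∈ S := by rw [hSp]; simp
      obtain ⟨hpP, hpn⟩ := hmem p hpS
      obtain ⟨q, hq1, hqP⟩ := Nat.exists_infinite_primes (p + 1)
      obtain ⟨r, hr1, hrP⟩ := Nat.exists_infinite_primes (q + 1)
      refine ⟨p, q, r, n.factorization p, hpP, hqP, hrP, by omega, by omega, by omega,
        hfpos p hpS, Or.inl ?_⟩
      rw [hSp, Finset.prod_singleton] at hprod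
      exact hprod.symm
    · -- two prime factors
      obtain ⟨p, q, hpq, hSpq⟩ := Finset.card_eq_two.mp hc
      have hpS : p ∈ S := by rw [hSpq]; simp
      have hqS : q ∈ S := by rw [hSpq]; simp
      obtain ⟨hpP, hpn⟩ := hmem p hpS
      obtain ⟨hqP, hqn⟩ := hmem q hqS
      have cpq : Nat.Coprime p q := (Nat.coprime_primes hpP hqP).mpr hpq
      rw [hSpq, Finset.prod_pair hpq] at hprod
      obtain ⟨r, hr1, hrP⟩ := Nat.exists_infinite_primes (max p q + 1)
      by_cases hfq : n.factorization q = 1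
      · refine ⟨p, q, r, n.factorization p, hpP, hqP, hrP, hpq, by omega, by omega,
          hfpos p hpS, Or.inr (Or.inl ?_)⟩
        rw [hfq, pow_one] at hprod
        exact hprod.symm
      · by_cases hfp : n.factorization p = 1
        · refine ⟨q, p, r, n.factorization q, hqP, hpP, hrP, Ne.symm hpq, by omega, by omega,
            hfpos q hqS, Or.inr (Or.inl ?_)⟩
          rw [hfp, pow_one, mul_comm] at hprod
          exact hprod.symm
        · exfalso
          have hfp2 : 2 ≤ n.factorization p := by have := hfpos p hpS; omega
          have hfq2 : 2 ≤ n.factorization q := by have := hfpos q hqS; omega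
          have hp2 : p ^ 2 ∣ n := (hpP.pow_dvd_iff_le_factorization hn0).mpr hfp2
          have hq2 : q ^ 2 ∣ n := (hqP.pow_dvd_iff_le_factorization hn0).mpr hfq2
          refine pgKey h x hpP hqP hpq
            (a := p ^ 2 * q) (b := p * q ^ 2)
            (dvd_mul_of_dvd_left (dvd_pow_self p two_ne_zero) q)
            (dvd_mul_left q (p ^ 2))
            (dvd_mul_right p (q ^ 2))
            (dvd_mul_of_dvd_right (dvd_pow_self q two_ne_zero) p)
            ((cpq.pow_left 2).mul_dvd_of_dvd_of_dvd hp2 hqn)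
            ((cpq.pow_right 2).mul_dvd_of_dvd_of_dvd hpn hq2)
            ?_ ?_
          · intro hd
            have h1 : p ^ 2 ∣ p * q ^ 2 := (dvd_mul_right (p ^ 2) q).trans hd
            have h2 : p ^ 2 ∣ p := ((cpq.pow 2 2)).dvd_of_dvd_mul_right h1
            have := Nat.le_of_dvd hpP.pos h2
            nlinarith [hpP.two_le]
          · intro hd
            have h1 : q ^ 2 ∣ q * p ^ 2 := by
              refine (dvd_mul_right (q ^ 2) p).trans ?_
              rw [mul_comm p (q ^ 2)] at hd
              calc q ^ 2 * p ∣ q ^ 2 * p * 1 := dvd_mul_right _ 1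
                _ = q ^ 2 * p := by ring
                _ ∣ p ^ 2 * q := hd
                _ = q * p ^ 2 := by ring
            have h2 : q ^ 2 ∣ q := ((cpq.symm.pow 2 2)).dvd_of_dvd_mul_right h1
            have := Nat.le_of_dvd hqP.pos h2
            nlinarith [hqP.two_le]
    · -- three prime factors
      obtain ⟨p, q, r, hpq, hpr, hqr, hSpqr⟩ := Finset.card_eq_three.mp hc
      have hpS : p ∈ S := by rw [hSpqr]; simp
      have hqS : q ∈ S := by rw [hSpqr]; simp
      have hrS : r ∈ S := by rw [hSpqr]; simp
      obtain ⟨hpP, hpn⟩ := hmem p hpS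
      obtain ⟨hqP, hqn⟩ := hmem q hqS
      obtain ⟨hrP, hrn⟩ := hmem r hrS
      rw [hSpqr] at hprod
      rw [Finset.prod_insert (by simp [hpq, hpr]),
        Finset.prod_insert (by simp [hqr]), Finset.prod_singleton] at hprod
      by_cases hfp : n.factorization p = 1
      · by_cases hfq : n.factorization q = 1
        · by_cases hfr : n.factorization r = 1
          · refine ⟨p, q, r, 1, hpP, hqP, hrP, hpq, hpr, hqr, one_pos, Or.inr (Or.inr ?_)⟩
            rw [hfp, hfq, hfr, pow_one, pow_one, pow_one, ← mul_assoc] at hprod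
            exact hprod.symm
          · exact absurd (pgKey3 h x hrP hpP hqP (Ne.symm hpr) (Ne.symm hqr) hpq
              ((hrP.pow_dvd_iff_le_factorization hn0).mpr (by have := hfpos r hrS; omega))
              hpn hqn) not_false
        · exact absurd (pgKey3 h x hqP hpP hrP (Ne.symm hpq) hqr hpr
            ((hqP.pow_dvd_iff_le_factorization hn0).mpr (by have := hfpos q hqS; omega))
            hpn hrn) not_false
      · exact absurd (pgKey3 h x hpP hqP hrP hpq hpr hqr
          ((hpP.pow_dvd_iff_le_factorization hn0).mpr (by have := hfpos p hpS; omega))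
          hqn hrn) not_false
  · -- at least four prime factors
    exfalso
    have hS0 : 0 < S.card := by omega
    obtain ⟨p, hpS⟩ := Finset.card_pos.mp hS0
    have hq' : 0 < (S.erase p).card := by rw [Finset.card_erase_of_mem hpS]; omega
    obtain ⟨q, hqS'⟩ := Finset.card_pos.mp hq'
    obtain ⟨hqp, hqS⟩ := Finset.mem_erase.mp hqS'
    have hr' : 0 < ((S.erase p).erase q).card := by
      rw [Finset.card_erase_of_mem hqS', Finset.card_erase_of_mem hpS]; omega
    obtain ⟨r, hrS''⟩ := Finset.card_pos.mp hr'
    obtain ⟨hrq, hrS'⟩ := Finset.mem_erase.mp hrS''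
    obtain ⟨hrp, hrS⟩ := Finset.mem_erase.mp hrS'
    have hs' : 0 < (((S.erase p).erase q).erase r).card := by
      rw [Finset.card_erase_of_mem hrS'', Finset.card_erase_of_mem hqS',
        Finset.card_erase_of_mem hpS]; omega
    obtain ⟨s, hsS'''⟩ := Finset.card_pos.mp hs'
    obtain ⟨hsr, hsS''⟩ := Finset.mem_erase.mp hsS'''
    obtain ⟨hsq, hsS'⟩ := Finset.mem_erase.mp hsS''
    obtain ⟨hsp, hsS⟩ := Finset.mem_erase.mp hsS'
    obtain ⟨hpP, hpn⟩ := hmem p hpS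
    obtain ⟨hqP, hqn⟩ := hmem q hqS
    obtain ⟨hrP, hrn⟩ := hmem r hrS
    obtain ⟨hsP, hsn⟩ := hmem s hsS
    have cpq : Nat.Coprime p q := (Nat.coprime_primes hpP hqP).mpr (Ne.symm hqp)
    have cpr : Nat.Coprime p r := (Nat.coprime_primes hpP hrP).mpr (Ne.symm hrp)
    have cps : Nat.Coprime p s := (Nat.coprime_primes hpP hsP).mpr (Ne.symm hsp)
    have cqr : Nat.Coprime q r := (Nat.coprime_primes hqP hrP).mpr (Ne.symm hrq)
    have cqs : Nat.Coprime q s := (Nat.coprime_primes hqP hsP).mpr (Ne.symm hsq)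
    have crs : Nat.Coprime r s := (Nat.coprime_primes hrP hsP).mpr (Ne.symm hsr)
    refine pgKey h x hpP hqP (Ne.symm hqp)
      (a := p * (q * r)) (b := p * (q * s))
      (dvd_mul_right p (q * r))
      (dvd_mul_of_dvd_right (dvd_mul_right q r) p)
      (dvd_mul_right p (q * s))
      (dvd_mul_of_dvd_right (dvd_mul_right q s) p)
      ((cpq.mul_right cpr).mul_dvd_of_dvd_of_dvd hpn (cqr.mul_dvd_of_dvd_of_dvd hqn hrn))
      ((cpq.mul_right cps).mul_dvd_of_dvd_of_dvd hpn (cqs.mul_dvd_of_dvd_of_dvd hqn hsn))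
      ?_ ?_
    · intro hd
      have h1 : r ∣ p * (q * s) :=
        ((dvd_mul_left r q).trans (dvd_mul_left (q * r) p)).trans hd
      have c1 : Nat.Coprime r (p * (q * s)) := cpr.symm.mul_right (cqr.symm.mul_right crs)
      exact hrP.one_lt.ne' (Nat.Coprime.eq_one_of_dvd c1 h1)
    · intro hd
      have h1 : s ∣ p * (q * r) :=
        ((dvd_mul_left s q).trans (dvd_mul_left (q * s) p)).trans hd
      have c1 : Nat.Coprime s (p * (q * r)) := cps.symm.mul_right (cqs.symm.mul_right crs.symm)
      exact hsP.one_lt.ne' (Nat.Coprime.eq_one_of_dvd c1 h1)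
end

section
/- Let G be a finite group whose power graph P(G) is C_4-free, and let x ∈ G be an element of order pqr, where p, q, r are distinct primes. Then the centralizer of x in G equals the cyclic subgroup generated by x, i.e. C_G(x) = ⟨x⟩. -/
private lemma mem_zpowers_pow_coprime {G : Type*} [Group G] (g : G) {n : ℕ}
    (h : n.Coprime (orderOf g)) : g ∈ Subgroup.zpowers (g ^ n) := by
  obtain ⟨m, hm⟩ := exists_pow_eq_self_of_coprime h
  have h2 : (g ^ n) ^ m ∈ Subgroup.zpowers (g ^ n) := pow_mem (Subgroup.mem_zpowers _) m
  rwa [hm] at h2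

private lemma prime_dvd_three {p q r s : ℕ} (hp : p.Prime) (hq : q.Prime) (hr : r.Prime)
    (hs : s.Prime) (h : s ∣ p * q * r) : s = p ∨ s = q ∨ s = r := by
  rcases (Nat.Prime.dvd_mul hs).mp h with h' | h'
  · rcases (Nat.Prime.dvd_mul hs).mp h' with h'' | h''
    · exact Or.inl ((Nat.prime_dvd_prime_iff_eq hs hp).mp h'')
    · exact Or.inr (Or.inl ((Nat.prime_dvd_prime_iff_eq hs hq).mp h''))
  · exact Or.inr (Or.inr ((Nat.prime_dvd_prime_iff_eq hs hr).mp h'))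

private lemma order_sub {G : Type*} [Group G] [Finite G] {x : G} {a b : ℕ}
    (hx : orderOf x = a * b) (ha : 0 < a) : orderOf (x ^ a) = b := by
  rw [orderOf_pow, hx, Nat.gcd_eq_right (dvd_mul_right a b), Nat.mul_div_cancel_left b ha]

/-- The case of an element `t` of prime order `s` (with `s ≠ q`, `s ≠ r`),
commuting with `x` but outside `⟨x⟩`. -/
private lemma prime_case {G : Type*} [Group G] [Finite G]
    (h : pgC4Free G) (p q r s : ℕ) (hp : p.Prime) (hq : q.Prime) (hr : r.Prime) (hs : s.Prime)
    (hpq : p ≠ q) (hpr : p ≠ r) (hqr : q ≠ r) (hsq : s ≠ q) (hsr : s ≠ r)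
    (x t : G) (hx : orderOf x = p * q * r) (hc : Commute x t)
    (ht : t ∉ Subgroup.zpowers x) (hts : orderOf t = s) : False := by
  set b : G := x ^ p * t with hbdef
  set c : G := x ^ (p * q) with hcdef
  set d : G := x ^ (p * r) with hddef
  have hts1 : t ^ s = 1 := by rw [← hts]; exact pow_orderOf_eq_one t
  have hx1 : x ^ (p * q * r) = 1 := by rw [← hx]; exact pow_orderOf_eq_one x
  have hoc : orderOf c = r := order_sub (by rw [hx]) (Nat.mul_pos hp.pos hq.pos)
  have hod : orderOf d = q := by
    refine order_sub (by rw [hx]; ring) (Nat.mul_pos hp.pos hr.pos)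
  have hcx : c ∈ Subgroup.zpowers x := pow_mem (Subgroup.mem_zpowers x) _
  have hdx : d ∈ Subgroup.zpowers x := pow_mem (Subgroup.mem_zpowers x) _
  have hbx : b ∉ Subgroup.zpowers x := by
    intro hb
    refine ht ?_
    have htb : t = (x ^ p)⁻¹ * b := by rw [hbdef, inv_mul_cancel_left]
    rw [htb]
    exact mul_mem (inv_mem (pow_mem (Subgroup.mem_zpowers x) p))  hb
  -- c ∈ ⟨b⟩
  have hb1 : c ^ s = b ^ (q * s) := by
    calc c ^ s = x ^ (p * q * s) := by rw [hcdef, ← pow_mul]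
    _ = x ^ (p * (q * s)) * 1 := by rw [mul_one]; ring_nf
    _ = (x ^ p) ^ (q * s) * t ^ (q * s) := by
        rw [← pow_mul, mul_comm q s, pow_mul t s q, hts1, one_pow]
    _ = b ^ (q * s) := ((hc.pow_left p).mul_pow (q * s)).symm
  have hcb : c ∈ Subgroup.zpowers b := by
    have h1 : c ∈ Subgroup.zpowers (c ^ s) :=
      mem_zpowers_pow_coprime c (by rw [hoc]; exact (Nat.coprime_primes hs hr).mpr hsr)
    have h2 : Subgroup.zpowers (c ^ s) ≤ Subgroup.zpowers b := by
      rw [hb1]; exact Subgroup.zpowers_le.mpr (pow_mem (Subgroup.mem_zpowers b) _)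
    exact h2 h1
  -- d ∈ ⟨b⟩
  have hb2 : d ^ s = b ^ (r * s) := by
    calc d ^ s = x ^ (p * r * s) := by rw [hddef, ← pow_mul]
    _ = x ^ (p * (r * s)) * 1 := by rw [mul_one]; ring_nf
    _ = (x ^ p) ^ (r * s) * t ^ (r * s) := by
        rw [← pow_mul, mul_comm r s, pow_mul t s r, hts1, one_pow]
    _ = b ^ (r * s) := ((hc.pow_left p).mul_pow (r * s)).symm
  have hdb : d ∈ Subgroup.zpowers b := by
    have h1 : d ∈ Subgroup.zpowers (d ^ s) :=
      mem_zpowers_pow_coprime d (by rw [hod]; exact (Nat.coprime_primes hs hq).mpr hsq)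
    have h2 : Subgroup.zpowers (d ^ s) ≤ Subgroup.zpowers b := by
      rw [hb2]; exact Subgroup.zpowers_le.mpr (pow_mem (Subgroup.mem_zpowers b) _)
    exact h2 h1
  -- x ∉ ⟨b⟩
  have hxb : x ∉ Subgroup.zpowers b := by
    intro hxbmem
    have hdvd1 : orderOf x ∣ orderOf b := orderOf_dvd_of_mem_zpowers hxbmem
    have hb0 : b ^ (q * r * s) = 1 := by
      calc b ^ (q * r * s) = (x ^ p) ^ (q * r * s) * t ^ (q * r * s) :=
            (hc.pow_left p).mul_pow _
      _ = (x ^ (p * q * r)) ^ s * (t ^ s) ^ (q * r) := by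
            rw [← pow_mul, ← pow_mul, ← pow_mul]; ring_nf
      _ = 1 := by rw [hx1, hts1, one_pow, one_pow, one_mul]
    have hdvd2 : orderOf b ∣ q * r * s := orderOf_dvd_of_pow_eq_one hb0
    have hpdvd : p ∣ q * r * s := by
      refine dvd_trans ?_ (dvd_trans (hx ▸ hdvd1) hdvd2)
      exact ⟨q * r, by ring⟩
    rcases prime_dvd_three hq hr hs hp hpdvd with h' | h' | h'
    · exact hpq h'
    · exact hpr h'
    · -- p = s : then orderOf b = p*q*r and ⟨x⟩ = ⟨b⟩
      have hqrs : q * r * s = p * q * r := by rw [← h']; ring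
      have hob : orderOf b = p * q * r :=
        Nat.dvd_antisymm (hqrs ▸ hdvd2) (hx ▸ hdvd1)
      have hle : Subgroup.zpowers x ≤ Subgroup.zpowers b := Subgroup.zpowers_le.mpr hxbmem
      have hcard : Nat.card (Subgroup.zpowers b) ≤ Nat.card (Subgroup.zpowers x) := by
        rw [Nat.card_zpowers, Nat.card_zpowers, hob, hx]
      have heq := Subgroup.eq_of_le_of_card_ge hle hcard
      exact hbx (heq ▸ Subgroup.mem_zpowers b)
  -- order facts for distinctness
  have hox : orderOf x = p * q * r := hx
  have h2p : 2 ≤ p := hp.two_le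
  have h2q : 2 ≤ q := hq.two_le
  have h2r : 2 ≤ r := hr.two_le
  have hxc : x ≠ c := fun he => by
    have : p * q * r = r := by rw [← hox, he, hoc]
    have hge : 2 * 2 * r ≤ p * q * r := Nat.mul_le_mul (Nat.mul_le_mul h2p h2q) le_rfl
    linarith
  have hxd : x ≠ d := fun he => by
    have : p * q * r = q := by rw [← hox, he, hod]
    have hge : 2 * q * 2 ≤ p * q * r := Nat.mul_le_mul (Nat.mul_le_mul h2p le_rfl) h2r
    linarith
  have hcd : c ≠ d := fun he => by
    have : r = q := by rw [← hoc, he, hod]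
    exact hqr this.symm
  have hxb' : x ≠ b := fun he => hbx (he ▸ Subgroup.mem_zpowers x)
  have hcb' : c ≠ b := fun he => hbx (he ▸ hcx)
  have hdb' : d ≠ b := fun he => hbx (he ▸ hdx)
  -- assemble the C4
  refine h ⟨x, c, b, d, hxc, hxb', hxd, hcb', hcd, hdb'.symm, ?_, ?_, ?_, ?_, ?_, ?_⟩
  · exact ⟨hxc, Or.inr hcx⟩
  · exact ⟨hcb', Or.inl hcb⟩
  · exact ⟨hdb'.symm, Or.inr hdb⟩
  · exact ⟨hxd.symm, Or.inl hdx⟩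
  · rintro ⟨-, hor⟩
    rcases hor with h' | h'
    · exact hxb h'
    · exact hbx h'
  · rintro ⟨-, hor⟩
    rcases hor with h' | h'
    · have : r ∣ q := by rw [← hoc, ← hod]; exact orderOf_dvd_of_mem_zpowers h'
      exact hqr ((Nat.prime_dvd_prime_iff_eq hr hq).mp this).symm
    · have : q ∣ r := by rw [← hod, ← hoc]; exact orderOf_dvd_of_mem_zpowers h'
      exact hqr ((Nat.prime_dvd_prime_iff_eq hq hr).mp this)

/-- The case of an element `t` of order `p²` with `t^p ∈ ⟨x⟩`,
commuting with `x` but outside `⟨x⟩`. -/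
private lemma square_case {G : Type*} [Group G] [Finite G]
    (h : pgC4Free G) (p q r : ℕ) (hp : p.Prime) (hq : q.Prime) (hr : r.Prime)
    (hpq : p ≠ q) (hpr : p ≠ r) (hqr : q ≠ r)
    (x t : G) (hx : orderOf x = p * q * r) (hc : Commute x t)
    (ht : t ∉ Subgroup.zpowers x) (hto : orderOf t = p ^ 2)
    (htp : t ^ p ∈ Subgroup.zpowers x) : False := by
  set A : G := x ^ (p * r) * t with hAdef
  set C : G := t ^ p with hCdef
  set D : G := x ^ (p * r) with hDdef
  have ht2 : t ^ (p * p) = 1 := by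
    rw [← pow_two, ← hto]; exact pow_orderOf_eq_one t
  have hx1 : x ^ (p * q * r) = 1 := by rw [← hx]; exact pow_orderOf_eq_one x
  have hoC : orderOf C = p := by
    rw [hCdef, orderOf_pow, hto, pow_two, Nat.gcd_eq_right (dvd_mul_left p p),
      Nat.mul_div_cancel p hp.pos]
  have hoD : orderOf D = q := by
    refine order_sub (by rw [hx]; ring) (Nat.mul_pos hp.pos hr.pos)
  have hDx : D ∈ Subgroup.zpowers x := pow_mem (Subgroup.mem_zpowers x) _
  have hAx : A ∉ Subgroup.zpowers x := by
    intro hA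
    refine ht ?_
    have htA : t = (x ^ (p * r))⁻¹ * A := by rw [hAdef, inv_mul_cancel_left]
    rw [htA]
    exact mul_mem (inv_mem (pow_mem (Subgroup.mem_zpowers x) _)) hA
  -- C ∈ ⟨A⟩
  have hA1 : C ^ q = A ^ (p * q) := by
    calc C ^ q = 1 * (t ^ p) ^ q := by rw [one_mul, hCdef]
    _ = (x ^ (p * r)) ^ (p * q) * t ^ (p * q) := by
        rw [← pow_mul, ← pow_mul, show p * r * (p * q) = p * q * r * p by ring,
          pow_mul x, hx1, one_pow]
    _ = A ^ (p * q) := ((hc.pow_left (p * r)).mul_pow (p * q)).symm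
  have hCA : C ∈ Subgroup.zpowers A := by
    have h1 : C ∈ Subgroup.zpowers (C ^ q) :=
      mem_zpowers_pow_coprime C (by rw [hoC]; exact (Nat.coprime_primes hq hp).mpr (Ne.symm hpq))
    have h2 : Subgroup.zpowers (C ^ q) ≤ Subgroup.zpowers A := by
      rw [hA1]; exact Subgroup.zpowers_le.mpr (pow_mem (Subgroup.mem_zpowers A) _)
    exact h2 h1
  -- D ∈ ⟨A⟩
  have hA2 : D ^ (p * p) = A ^ (p * p) := by
    calc D ^ (p * p) = (x ^ (p * r)) ^ (p * p) * t ^ (p * p) := by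
          rw [ht2, mul_one, hDdef]
    _ = A ^ (p * p) := ((hc.pow_left (p * r)).mul_pow (p * p)).symm
  have hDA : D ∈ Subgroup.zpowers A := by
    have hcop : (p * p).Coprime (orderOf D) := by
      rw [hoD]
      exact Nat.Coprime.mul ((Nat.coprime_primes hp hq).mpr hpq)
        ((Nat.coprime_primes hp hq).mpr hpq)
    have h1 : D ∈ Subgroup.zpowers (D ^ (p * p)) := mem_zpowers_pow_coprime D hcop
    have h2 : Subgroup.zpowers (D ^ (p * p)) ≤ Subgroup.zpowers A := by
      rw [hA2]; exact Subgroup.zpowers_le.mpr (pow_mem (Subgroup.mem_zpowers A) _)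
    exact h2 h1
  -- x ∉ ⟨A⟩
  have hxA : x ∉ Subgroup.zpowers A := by
    intro hxAmem
    have hdvd1 : orderOf x ∣ orderOf A := orderOf_dvd_of_mem_zpowers hxAmem
    have hA0 : A ^ (p * p * q) = 1 := by
      calc A ^ (p * p * q) = (x ^ (p * r)) ^ (p * p * q) * t ^ (p * p * q) :=
            (hc.pow_left (p * r)).mul_pow _
      _ = (x ^ (p * q * r)) ^ (p * p) * (t ^ (p * p)) ^ q := by
            rw [← pow_mul, ← pow_mul, ← pow_mul]; ring_nf
      _ = 1 := by rw [hx1, ht2, one_pow, one_pow, one_mul]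
    have hdvd2 : orderOf A ∣ p * p * q := orderOf_dvd_of_pow_eq_one hA0
    have hrdvd : r ∣ p * p * q := by
      refine dvd_trans ?_ (dvd_trans (hx ▸ hdvd1) hdvd2)
      exact ⟨p * q, by ring⟩
    rcases prime_dvd_three hp hp hq hr hrdvd with h' | h' | h'
    · exact hpr h'.symm
    · exact hpr h'.symm
    · exact hqr h'.symm
  have h2p : 2 ≤ p := hp.two_le
  have h2q : 2 ≤ q := hq.two_le
  have h2r : 2 ≤ r := hr.two_le
  have hxC : x ≠ C := fun he => by
    have : p * q * r = p := by rw [← hx, he, hoC]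
    have hge : p * 2 * 2 ≤ p * q * r := Nat.mul_le_mul (Nat.mul_le_mul le_rfl h2q) h2r
    linarith
  have hxD : x ≠ D := fun he => by
    have : p * q * r = q := by rw [← hx, he, hoD]
    have hge : 2 * q * 2 ≤ p * q * r := Nat.mul_le_mul (Nat.mul_le_mul h2p le_rfl) h2r
    linarith
  have hCD : C ≠ D := fun he => by
    have : p = q := by rw [← hoC, he, hoD]
    exact hpq this
  have hxA' : x ≠ A := fun he => hAx (he ▸ Subgroup.mem_zpowers x)
  have hCA' : C ≠ A := fun he => hAx (he ▸ htp)
  have hDA' : D ≠ A := fun he => hAx (he ▸ hDx)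
  refine h ⟨x, C, A, D, hxC, hxA', hxD, hCA', hCD, hDA'.symm, ?_, ?_, ?_, ?_, ?_, ?_⟩
  · exact ⟨hxC, Or.inr htp⟩
  · exact ⟨hCA', Or.inl hCA⟩
  · exact ⟨hDA'.symm, Or.inr hDA⟩
  · exact ⟨hxD.symm, Or.inl hDx⟩
  · rintro ⟨-, hor⟩
    rcases hor with h' | h'
    · exact hxA h'
    · exact hAx h'
  · rintro ⟨-, hor⟩
    rcases hor with h' | h'
    · have : p ∣ q := by rw [← hoC, ← hoD]; exact orderOf_dvd_of_mem_zpowers h'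
      exact hpq ((Nat.prime_dvd_prime_iff_eq hp hq).mp this)
    · have : q ∣ p := by rw [← hoD, ← hoC]; exact orderOf_dvd_of_mem_zpowers h'
      exact hpq ((Nat.prime_dvd_prime_iff_eq hq hp).mp this).symm

private lemma no_outside {G : Type*} [Group G] [Finite G]
    (h : pgC4Free G) (p q r : ℕ) (hp : p.Prime) (hq : q.Prime) (hr : r.Prime)
    (hpq : p ≠ q) (hpr : p ≠ r) (hqr : q ≠ r)
    (x : G) (hx : orderOf x = p * q * r) :
    ∀ n : ℕ, ∀ y : G, orderOf y ≤ n → Commute x y → y ∉ Subgroup.zpowers x → False := by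
  intro n
  induction n with
  | zero => intro y hy _ _; have := orderOf_pos y; omega
  | succ n ih =>
    intro y hy hc hymem
    by_cases hcase : ∃ s : ℕ, s.Prime ∧ s ∣ orderOf y ∧ y ^ s ∉ Subgroup.zpowers x
    · obtain ⟨s, hs, hsd, hys⟩ := hcase
      refine ih (y ^ s) ?_ (hc.pow_right s) hys
      have hlt : orderOf (y ^ s) < orderOf y := by
        rw [orderOf_pow' y hs.ne_zero, Nat.gcd_eq_right hsd]
        exact Nat.div_lt_self (orderOf_pos y) hs.one_lt
      omega
    · push_neg at hcase
      -- every prime-divisor power lands inside ⟨x⟩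
      have hn1 : orderOf y ≠ 1 := by
        intro h1
        exact hymem (orderOf_eq_one_iff.mp h1 ▸ one_mem _)
      have hn0 : orderOf y ≠ 0 := (orderOf_pos y).ne'
      set s := (orderOf y).minFac with hsdef
      have hs : s.Prime := Nat.minFac_prime hn1
      have hsd : s ∣ orderOf y := Nat.minFac_dvd _
      by_cases hps : ∃ s' : ℕ, s'.Prime ∧ s' ∣ orderOf y ∧ s' ≠ s
      · -- two distinct prime divisors: Bezout forces y ∈ ⟨x⟩
        obtain ⟨s', hs', hsd', hss'⟩ := hps
        have hco : Nat.Coprime s s' := (Nat.coprime_primes hs hs').mpr (Ne.symm hss')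
        have h1 : y ^ (s : ℤ) ∈ Subgroup.zpowers x := by
          rw [zpow_natCast]; exact hcase s hs hsd
        have h2 : y ^ (s' : ℤ) ∈ Subgroup.zpowers x := by
          rw [zpow_natCast]; exact hcase s' hs' hsd'
        refine hymem ?_
        have hco' : Nat.gcd s s' = 1 := hco
        have hbez : (1 : ℤ) = s * Nat.gcdA s s' + s' * Nat.gcdB s s' := by
          have h3 := Nat.gcd_eq_gcd_ab s s'
          rwa [hco', Nat.cast_one] at h3
        have hy2 : y = y ^ ((s : ℤ) * Nat.gcdA s s') * y ^ ((s' : ℤ) * Nat.gcdB s s') := by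
          rw [← zpow_add, ← hbez, zpow_one]
        rw [hy2, zpow_mul, zpow_mul]
        exact mul_mem (zpow_mem h1 _) (zpow_mem h2 _)
      · push_neg at hps
        have hsy : y ^ s ∈ Subgroup.zpowers x := hcase s hs hsd
        -- orderOf y is a power of s
        have hpow : orderOf y = s ^ (orderOf y).primeFactorsList.length :=
          Nat.eq_prime_pow_of_unique_prime_dvd hn0 (fun hd hdd => hps _ hd hdd)
        set k := (orderOf y).primeFactorsList.length with hkdef
        have hk0 : k ≠ 0 := by
          intro hk
          rw [hk, pow_zero] at hpow
          exact hn1 hpow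
        have hys_ord : orderOf (y ^ s) = s ^ (k - 1) := by
          rw [orderOf_pow' y hs.ne_zero, Nat.gcd_eq_right hsd, hpow]
          rw [← pow_sub_one_mul hk0 s, Nat.mul_div_cancel _ hs.pos]
        have hdvd : s ^ (k - 1) ∣ p * q * r := by
          rw [← hys_ord, ← hx]
          exact orderOf_dvd_of_mem_zpowers hsy
        have hsqf : Squarefree (p * q * r) := by
          have hcop : (p * q).Coprime r :=
            Nat.Coprime.mul ((Nat.coprime_primes hp hr).mpr hpr)
              ((Nat.coprime_primes hq hr).mpr hqr)
          rw [Nat.squarefree_mul hcop]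
          refine ⟨?_, hr.prime.squarefree⟩
          rw [Nat.squarefree_mul ((Nat.coprime_primes hp hq).mpr hpq)]
          exact ⟨hp.prime.squarefree, hq.prime.squarefree⟩
        have hk2 : k ≤ 2 := by
          by_contra hk3
          push_neg at hk3
          have : s * s ∣ p * q * r := by
            refine dvd_trans ?_ hdvd
            have : s ^ 2 ∣ s ^ (k - 1) := pow_dvd_pow s (by omega)
            rwa [pow_two] at this
          exact hs.one_lt.ne' (Nat.isUnit_iff.mp (hsqf s this))
        have hk12 : k = 1 ∨ k = 2 := by omega
        rcases hk12 with hk | hk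
        · -- k = 1 : prime order
          have hoy : orderOf y = s := by rw [hpow, hk, pow_one]
          by_cases hsq : s = q
          · exact prime_case h q p r s hq hp hr hs (Ne.symm hpq) hqr
              hpr (hsq ▸ (Ne.symm hpq)) (hsq ▸ hqr) x y (by rw [hx]; ring) hc hymem hoy
          by_cases hsr : s = r
          · exact prime_case h r p q s hr hp hq hs (Ne.symm hpr) (Ne.symm hqr)
              hpq (hsr ▸ Ne.symm hpr) (hsr ▸ Ne.symm hqr) x y (by rw [hx]; ring) hc hymem hoy
          · exact prime_case h p q r s hp hq hr hs hpq hpr hqr hsq hsr x y hx hc hymem hoy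
        · -- k = 2 : order s², with s ∈ {p,q,r}
          have hoy : orderOf y = s ^ 2 := by rw [hpow, hk]
          have hsdvd : s ∣ p * q * r := by
            have h4 := hdvd; rw [hk] at h4; simpa using h4
          rcases prime_dvd_three hp hq hr hs hsdvd with h' | h' | h'
          · exact square_case h p q r hp hq hr hpq hpr hqr x y hx hc hymem
              (h' ▸ hoy) (h' ▸ hsy)
          · exact square_case h q p r hq hp hr (Ne.symm hpq) hqr hpr x y
              (by rw [hx]; ring) hc hymem (h' ▸ hoy) (h' ▸ hsy)
          · exact square_case h r p q hr hp hq (Ne.symm hpr) (Ne.symm hqr) hpq x y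
              (by rw [hx]; ring) hc hymem (h' ▸ hoy) (h' ▸ hsy)

theorem centralizer_eq_zpowers_of_order_pqr {G : Type*} [Group G] [Finite G]
    (h : pgC4Free G) (p q r : ℕ) (hp : p.Prime) (hq : q.Prime) (hr : r.Prime)
    (hpq : p ≠ q) (hpr : p ≠ r) (hqr : q ≠ r)
    (x : G) (hx : orderOf x = p * q * r) :
    Subgroup.centralizer ({x} : Set G) = Subgroup.zpowers x := by
  refine le_antisymm ?_ ?_
  · intro y hy
    by_contra hymem
    have hc : Commute x y := by
      have := Subgroup.mem_centralizer_iff.mp hy x (Set.mem_singleton x)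
      exact this
    exact no_outside h p q r hp hq hr hpq hpr hqr x hx (orderOf y) y le_rfl hc hymem
  · refine Subgroup.zpowers_le.mpr ?_
    exact Subgroup.mem_centralizer_iff.mpr (fun g hg => by rw [Set.eq_of_mem_singleton hg])
end

section
/- Let G be a finite group whose power graph P(G) is C_4-free, and let x ∈ G be an element of order p^m q, where p, q are distinct primes and m > 1. Then for any Sylow p-subgroup P of C_G(x), the Hughes subgroup H_p(P) is a cyclic subgroup that is normal in C_G(x), and every Sylow q-subgroup of C_G(x) has exponent q. -/
/-- The Hughes subgroup of `H` with respect to the prime `p`: the subgroup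
generated by all elements whose order is different from `p`. -/
def hughesSubgroup (p : ℕ) (H : Type*) [Group H] : Subgroup H :=
  Subgroup.closure {h : H | orderOf h ≠ p}

open Subgroup

section Helpers
variable {G : Type*} [Group G]

lemma pg_mem_zpowers_mul_left {a b : G} (hc : Commute a b)
    (hco : Nat.Coprime (orderOf a) (orderOf b)) : a ∈ zpowers (a * b) := by
  obtain ⟨t, ht1, ht2⟩ := Nat.chineseRemainder hco 1 0
  refine Subgroup.mem_zpowers_iff.mpr ⟨(t : ℤ), ?_⟩
  rw [zpow_natCast, hc.mul_pow]
  have h1 : a ^ t = a ^ 1 := pow_eq_pow_iff_modEq.mpr ht1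
  have h2 : b ^ t = b ^ 0 := pow_eq_pow_iff_modEq.mpr ht2
  rw [h1, h2, pow_one, pow_zero, mul_one]

lemma pg_mem_zpowers_mul_right {a b : G} (hc : Commute a b)
    (hco : Nat.Coprime (orderOf a) (orderOf b)) : b ∈ zpowers (a * b) := by
  rw [hc.eq]
  exact pg_mem_zpowers_mul_left hc.symm hco.symm

lemma pg_decomp {p q : ℕ} (hq : q.Prime) (hqp : ¬ q ∣ p) {g h b : G} {K L : ℕ}
    (hgK : g ^ p ^ K = 1) (hhL : h ^ p ^ L = 1) (hb : orderOf b = q)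
    (chb : Commute h b)
    (hmem : g * b ∈ zpowers (h * b)) : g ∈ zpowers h := by
  obtain ⟨n, hn⟩ := Subgroup.mem_zpowers_iff.mp hmem
  rw [chb.mul_zpow] at hn
  have hg' : g = h ^ n * b ^ (n - 1) := by
    have h0 : g * b = h ^ n * (b ^ (n-1) * b) := by
      rw [← hn]; congr 1
      rw [← zpow_add_one, sub_add_cancel]
    calc g = g * b * b⁻¹ := by group
    _ = h ^ n * (b ^ (n-1) * b) * b⁻¹ := by rw [h0]
    _ = h ^ n * b ^ (n - 1) := by group
  have cb' : Commute (h ^ n) (b ^ (n - 1)) := (chb.zpow_zpow n (n-1))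
  have key : (b ^ (n - 1)) ^ ((p:ℤ) ^ (K + L)) = 1 := by
    have e1 : g ^ ((p:ℤ) ^ (K + L)) = 1 := by
      have e : ((p:ℤ) ^ (K+L)) = ((p ^ (K+L) : ℕ) : ℤ) := by push_cast; ring
      rw [e, zpow_natCast, pow_add, pow_mul, hgK, one_pow]
    have e2 : (h ^ n) ^ ((p:ℤ) ^ (K + L)) = 1 := by
      rw [← zpow_mul]
      have e : n * (p:ℤ) ^ (K + L) = ((p ^ L : ℕ) : ℤ) * (n * (p:ℤ)^K) := by push_cast; ring
      rw [e, zpow_mul, zpow_natCast, hhL, one_zpow]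
    have e3 := congrArg (fun z => z ^ ((p:ℤ) ^ (K + L))) hg'
    simp only [cb'.mul_zpow] at e3
    rw [e1, e2, one_mul] at e3
    exact e3.symm
  have hq2 : (q : ℤ) ∣ (n - 1) * (p:ℤ) ^ (K + L) := by
    rw [← hb]
    rw [← zpow_mul] at key
    exact (orderOf_dvd_iff_zpow_eq_one).mpr key
  have hqprime : Prime (q : ℤ) := Nat.prime_iff_prime_int.mp hq
  have hq3 : (q : ℤ) ∣ (n - 1) := by
    rcases hqprime.dvd_mul.mp hq2 with h1 | h1
    · exact h1
    · exact absurd (Int.natCast_dvd_natCast.mp (hqprime.dvd_of_dvd_pow h1)) hqp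
  have hbn : b ^ (n - 1) = 1 := by
    rw [← hb] at hq3
    exact orderOf_dvd_iff_zpow_eq_one.mp hq3
  rw [hbn, mul_one] at hg'
  exact ⟨n, hg'.symm⟩

lemma pg_pow_mul_ne {p q : ℕ} (hp : p.Prime) (hq : q.Prime) (hpq : p ≠ q) {k : ℕ}
    (hk : k ≠ 0) : p ^ k * q ≠ p ∧ p ^ k * q ≠ q := by
  constructor
  · intro e
    have hd : q ∣ p := e ▸ ⟨p ^ k, mul_comm _ _⟩
    exact hpq ((Nat.prime_dvd_prime_iff_eq hq hp).mp hd).symm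
  · intro e
    have h1 : p ^ k * q = 1 * q := by rw [one_mul]; exact e
    have h2 : p ^ k = 1 := Nat.eq_of_mul_eq_mul_right hq.pos h1
    exact absurd h2 (Nat.one_lt_pow hk hp.one_lt).ne'

lemma pg_comparable (h4 : pgC4Free G) {p q : ℕ} (hp : p.Prime) (hq : q.Prime)
    (hpq : p ≠ q) {g h b u : G} {k l : ℕ} (hk : k ≠ 0) (hl : l ≠ 0)
    (hg : orderOf g = p ^ k) (hh : orderOf h = p ^ l) (hb : orderOf b = q)
    (cgb : Commute g b) (chb : Commute h b)
    (hu : orderOf u = p) (hug : u ∈ zpowers g) (huh : u ∈ zpowers h) :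
    g ∈ zpowers h ∨ h ∈ zpowers g := by
  by_cases hgh : g ∈ zpowers h
  · exact Or.inl hgh
  by_cases hhg : h ∈ zpowers g
  · exact Or.inr hhg
  exfalso
  apply h4
  have hcop : Nat.Coprime p q := (Nat.coprime_primes hp hq).mpr hpq
  have hqp : ¬ q ∣ p := fun hd => hpq ((Nat.prime_dvd_prime_iff_eq hq hp).mp hd).symm
  have copg : Nat.Coprime (orderOf g) (orderOf b) := by
    rw [hg, hb]; exact hcop.pow_left k
  have coph : Nat.Coprime (orderOf h) (orderOf b) := by
    rw [hh, hb]; exact hcop.pow_left l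
  have memg : g ∈ zpowers (g*b) := pg_mem_zpowers_mul_left cgb copg
  have membg : b ∈ zpowers (g*b) := pg_mem_zpowers_mul_right cgb copg
  have memh : h ∈ zpowers (h*b) := pg_mem_zpowers_mul_left chb coph
  have membh : b ∈ zpowers (h*b) := pg_mem_zpowers_mul_right chb coph
  have ogb : orderOf (g*b) = p ^ k * q := by
    rw [cgb.orderOf_mul_eq_mul_orderOf_of_coprime copg, hg, hb]
  have ohb : orderOf (h*b) = p ^ l * q := by
    rw [chb.orderOf_mul_eq_mul_orderOf_of_coprime coph, hh, hb]
  have hgKone : g ^ p ^ k = 1 := by rw [← hg]; exact pow_orderOf_eq_one g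
  have hhLone : h ^ p ^ l = 1 := by rw [← hh]; exact pow_orderOf_eq_one h
  have nadj1 : ¬ pgAdj (g*b) (h*b) := by
    rintro ⟨-, hm | hm⟩
    · exact hgh (pg_decomp hq hqp hgKone hhLone hb chb hm)
    · exact hhg (pg_decomp hq hqp hhLone hgKone hb cgb hm)
  have nadj2 : ¬ pgAdj u b := by
    rintro ⟨-, hm | hm⟩
    · have hd := orderOf_dvd_of_mem_zpowers hm
      rw [hu, hb] at hd
      exact hpq ((Nat.prime_dvd_prime_iff_eq hp hq).mp hd)
    · have hd := orderOf_dvd_of_mem_zpowers hm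
      rw [hu, hb] at hd
      exact hpq ((Nat.prime_dvd_prime_iff_eq hq hp).mp hd).symm
  have neOrd : ∀ {y z : G}, orderOf y ≠ orderOf z → y ≠ z := fun hne e => hne (by rw [e])
  have d1 : g*b ≠ u := neOrd (by rw [ogb, hu]; exact (pg_pow_mul_ne hp hq hpq hk).1)
  have d2 : g*b ≠ h*b := by
    intro e
    exact hgh (mul_right_cancel e ▸ Subgroup.mem_zpowers h)
  have d3 : g*b ≠ b := neOrd (by rw [ogb, hb]; exact (pg_pow_mul_ne hp hq hpq hk).2)
  have d4 : u ≠ h*b := neOrd (by rw [ohb, hu]; exact fun e => (pg_pow_mul_ne hp hq hpq hl).1 e.symm)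
  have d5 : u ≠ b := neOrd (by rw [hu, hb]; exact hpq)
  have d6 : h*b ≠ b := neOrd (by rw [ohb, hb]; exact (pg_pow_mul_ne hp hq hpq hl).2)
  exact ⟨g*b, u, h*b, b, d1, d2, d3, d4, d5, d6,
    ⟨d1, Or.inr ((Subgroup.zpowers_le.mpr memg) hug)⟩,
    ⟨d4, Or.inl ((Subgroup.zpowers_le.mpr memh) huh)⟩,
    ⟨d6, Or.inr membh⟩,
    ⟨d3.symm, Or.inl membg⟩,
    nadj1, nadj2⟩

end Helpers

section Helpers2
variable {G : Type*} [Group G] [Finite G]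

/-- If `w^n ∈ zpowers a`, `w^n ≠ 1` and `orderOf w` is prime then `w ∈ zpowers a`. -/
lemma pg_gen_of_prime_order {p : ℕ} (hp : p.Prime) {w z : G} {n : ℤ}
    (hw : orderOf w = p) (hz : w ^ n = z) (hne : z ≠ 1) : w ∈ zpowers z := by
  have hmem : z ∈ zpowers w := ⟨n, hz⟩
  have hdvd : orderOf z ∣ p := hw ▸ orderOf_dvd_of_mem_zpowers hmem
  have hzo : orderOf z = p := by
    rcases (Nat.dvd_prime hp).mp hdvd with h1 | h1
    · exact absurd (orderOf_eq_one_iff.mp h1) hne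
    · exact h1
  have hle : zpowers z ≤ zpowers w := Subgroup.zpowers_le.mpr hmem
  have heq : zpowers z = zpowers w := by
    apply Subgroup.eq_of_le_of_card_ge hle
    rw [Nat.card_zpowers, Nat.card_zpowers, hw, hzo]
  rw [heq]
  exact Subgroup.mem_zpowers w

/-- The second C4: an element of order `p` commuting with `a` (order `p^m`, `m ≥ 2`) and
`b` (order `q`) must be a power of `a`. -/
lemma pg_orderp_mem (h4 : pgC4Free G) {p q m : ℕ} (hp : p.Prime) (hq : q.Prime)
    (hpq : p ≠ q) (hm : 2 ≤ m) {w a b : G}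
    (hw : orderOf w = p) (ha : orderOf a = p ^ m) (hb : orderOf b = q)
    (cwa : Commute w a) (cwb : Commute w b) (cab : Commute a b) :
    w ∈ zpowers a := by
  by_contra hcon
  apply h4
  have hm1 : m - 1 ≠ 0 := by omega
  have hm1' : m - 1 + 1 = m := by omega
  have hcop : Nat.Coprime p q := (Nat.coprime_primes hp hq).mpr hpq
  have hqp : ¬ q ∣ p := fun hd => hpq ((Nat.prime_dvd_prime_iff_eq hq hp).mp hd).symm
  have hpm_split : p ^ m = p ^ (m-1) * p := by rw [← pow_succ, hm1']
  -- order of a ^ p^(m-1) is p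
  have oa' : orderOf (a ^ p ^ (m-1)) = p := by
    rw [orderOf_pow' a (pow_ne_zero _ hp.pos.ne'), ha,
      Nat.gcd_eq_right (pow_dvd_pow p (Nat.sub_le m 1)), hpm_split,
      Nat.mul_div_cancel_left _ (Nat.pow_pos hp.pos)]
  have hwpow : ∀ n : ℕ, n ≠ 0 → w ^ p ^ n = 1 := by
    intro n hn
    apply orderOf_dvd_iff_pow_eq_one.mp
    rw [hw]; exact dvd_pow_self p hn
  have E : (w * a) ^ p ^ (m-1) = a ^ p ^ (m-1) := by
    rw [cwa.mul_pow, hwpow _ hm1, one_mul]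
  have hwa1 : w * a ≠ 1 := by
    intro e
    have e2 : a ^ p ^ (m-1) = 1 := by rw [← E, e, one_pow]
    have := oa'
    rw [e2, orderOf_one] at this
    exact hp.one_lt.ne this
  have hwapow : (w*a) ^ p ^ m = 1 := by
    rw [cwa.mul_pow, hwpow m (by omega)]
    rw [one_mul, ← ha]
    exact pow_orderOf_eq_one a
  obtain ⟨j, hjle, hj⟩ := (Nat.dvd_prime_pow hp).mp (orderOf_dvd_of_pow_eq_one hwapow)
  have hj1 : j ≠ 0 := by
    intro e
    rw [e, pow_zero] at hj
    exact hwa1 (orderOf_eq_one_iff.mp hj)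
  have cwab : Commute (w*a) b := Commute.mul_left cwb cab
  have copwa : Nat.Coprime (orderOf (w*a)) (orderOf b) := by
    rw [hj, hb]; exact hcop.pow_left j
  have copa : Nat.Coprime (orderOf a) (orderOf b) := by
    rw [ha, hb]; exact hcop.pow_left m
  have memwa : w*a ∈ zpowers (w*a*b) := pg_mem_zpowers_mul_left cwab copwa
  have memb2 : b ∈ zpowers (w*a*b) := pg_mem_zpowers_mul_right cwab copwa
  have mema : a ∈ zpowers (a*b) := pg_mem_zpowers_mul_left cab copa
  have memb1 : b ∈ zpowers (a*b) := pg_mem_zpowers_mul_right cab copa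
  have owab : orderOf (w*a*b) = p ^ j * q := by
    rw [cwab.orderOf_mul_eq_mul_orderOf_of_coprime copwa, hj, hb]
  have oab : orderOf (a*b) = p ^ m * q := by
    rw [cab.orderOf_mul_eq_mul_orderOf_of_coprime copa, ha, hb]
  have neOrd : ∀ {y z : G}, orderOf y ≠ orderOf z → y ≠ z := fun hne e => hne (by rw [e])
  -- distinctness
  have D1 : b ≠ a*b := neOrd (by
    rw [hb, oab]; exact fun e => (pg_pow_mul_ne hp hq hpq (by omega : m ≠ 0)).2 e.symm)
  have D2 : b ≠ a ^ p ^ (m-1) := neOrd (by rw [hb, oa']; exact fun e => hpq e.symm)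
  have D3 : b ≠ w*a*b := neOrd (by
    rw [hb, owab]; exact fun e => (pg_pow_mul_ne hp hq hpq hj1).2 e.symm)
  have D4 : a*b ≠ a ^ p ^ (m-1) := neOrd (by
    rw [oab, oa']; exact (pg_pow_mul_ne hp hq hpq (by omega : m ≠ 0)).1)
  have D5 : a*b ≠ w*a*b := by
    intro e
    rw [mul_assoc] at e
    have : w = 1 := right_eq_mul.mp e
    rw [this, orderOf_one] at hw
    exact hp.one_lt.ne hw
  have D6 : a ^ p ^ (m-1) ≠ w*a*b := neOrd (by
    rw [oa', owab]; exact fun e => (pg_pow_mul_ne hp hq hpq hj1).1 e.symm)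
  -- nonadjacency of b and a^p^(m-1)
  have N1 : ¬ pgAdj b (a ^ p ^ (m-1)) := by
    rintro ⟨-, hmm | hmm⟩
    · have hd := orderOf_dvd_of_mem_zpowers hmm
      rw [hb, oa'] at hd
      exact hpq ((Nat.prime_dvd_prime_iff_eq hq hp).mp hd).symm
    · have hd := orderOf_dvd_of_mem_zpowers hmm
      rw [hb, oa'] at hd
      exact hpq ((Nat.prime_dvd_prime_iff_eq hp hq).mp hd)
  -- nonadjacency of a*b and w*a*b
  have hatop : a ^ p ^ m = 1 := by rw [← ha]; exact pow_orderOf_eq_one a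
  have N2 : ¬ pgAdj (a*b) (w*a*b) := by
    rintro ⟨-, hmm | hmm⟩
    · -- a*b ∈ zpowers ((w*a)*b)  ⇒  a ∈ zpowers (w*a)
      have hd : a ∈ zpowers (w*a) := pg_decomp hq hqp hatop hwapow hb cwab hmm
      obtain ⟨n, hn⟩ := Subgroup.mem_zpowers_iff.mp hd
      rw [cwa.mul_zpow] at hn
      -- w^n * a^n = a  ⇒  w^n = a^(1-n)
      have hwn : w ^ n = a ^ (1 - n) := by
        have h1 : w ^ n = a * (a ^ n)⁻¹ := eq_mul_inv_of_mul_eq hn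
        have h2 : a ^ (1 - n) = a * (a ^ n)⁻¹ := by
          rw [zpow_sub, zpow_one]
        rw [h1, h2]
      by_cases hz : w ^ n = 1
      · -- then p ∣ n and p ∣ 1 - n, contradiction
        have hd1 : (p:ℤ) ∣ n := by
          rw [← hw]; exact orderOf_dvd_iff_zpow_eq_one.mpr hz
        have hd2 : ((p:ℤ)^m) ∣ (1 - n) := by
          have : a ^ (1-n) = 1 := by rw [← hwn]; exact hz
          have h5 := orderOf_dvd_iff_zpow_eq_one.mpr this
          rw [ha] at h5
          exact_mod_cast h5
        have hd3 : (p:ℤ) ∣ (1 - n) := dvd_trans (dvd_pow_self _ (by omega : m ≠ 0)) hd2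
        have : (p:ℤ) ∣ 1 := by
          have := dvd_add hd1 hd3
          simpa using this
        have hle1 : (p:ℤ) ≤ 1 := Int.le_of_dvd one_pos this
        have hle2 : p ≤ 1 := by exact_mod_cast hle1
        have := hp.one_lt
        omega
      · -- w ∈ zpowers (w^n) ⊆ zpowers a
        have hwin : w ∈ zpowers (w ^ n) := pg_gen_of_prime_order hp hw rfl hz
        have : zpowers (w ^ n) ≤ zpowers a := by
          apply Subgroup.zpowers_le.mpr
          rw [hwn]
          exact zpow_mem (Subgroup.mem_zpowers a) _
        exact hcon (this hwin)
    · -- w*a*b ∈ zpowers (a*b)  ⇒  w*a ∈ zpowers a  ⇒ w ∈ zpowers a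
      have hd : w*a ∈ zpowers a := pg_decomp hq hqp hwapow hatop hb cab hmm
      obtain ⟨n, hn⟩ := Subgroup.mem_zpowers_iff.mp hd
      apply hcon
      refine Subgroup.mem_zpowers_iff.mpr ⟨n - 1, ?_⟩
      rw [zpow_sub_one, hn]
      group
  -- order-p element of zpowers (w*a*b)
  have Ya : a ^ p ^ (m-1) ∈ zpowers (w*a*b) := by
    rw [← E]
    exact (Subgroup.zpowers_le.mpr memwa)
      (Subgroup.mem_zpowers_iff.mpr ⟨(p^(m-1) : ℕ), by rw [zpow_natCast]⟩)
  have Yab : a ^ p ^ (m-1) ∈ zpowers (a*b) :=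
    (Subgroup.zpowers_le.mpr mema)
      (Subgroup.mem_zpowers_iff.mpr ⟨(p^(m-1) : ℕ), by rw [zpow_natCast]⟩)
  exact ⟨b, a*b, a ^ p ^ (m-1), w*a*b, D1, D2, D3, D4, D5, D6,
    ⟨D1, Or.inl memb1⟩,
    ⟨D4, Or.inr Yab⟩,
    ⟨D6, Or.inl Ya⟩,
    ⟨D3.symm, Or.inr memb2⟩,
    N1, N2⟩

end Helpers2

section Helpers3
variable {G : Type*} [Group G]

lemma pg_c4_of_p2q2 {p q : ℕ} (hp : p.Prime) (hq : q.Prime) (hpq : p ≠ q)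
    {c : G} (hc : orderOf c = p ^ 2 * q ^ 2) : pgHasInducedC4 G := by
  have hp0 : 0 < p := hp.pos
  have hq0 : 0 < q := hq.pos
  have hdpq : ¬ p ∣ q := fun hd => hpq ((Nat.prime_dvd_prime_iff_eq hp hq).mp hd)
  have hdqp : ¬ q ∣ p := fun hd => hpq ((Nat.prime_dvd_prime_iff_eq hq hp).mp hd).symm
  -- orders of the four powers
  have o1 : orderOf (c ^ q) = p ^ 2 * q := by
    rw [orderOf_pow' c hq0.ne', hc, Nat.gcd_eq_right ⟨p^2*q, by ring⟩]
    have e : p ^ 2 * q ^ 2 = (p ^ 2 * q) * q := by ring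
    rw [e, Nat.mul_div_cancel _ hq0]
  have o2 : orderOf (c ^ p) = p * q ^ 2 := by
    rw [orderOf_pow' c hp0.ne', hc, Nat.gcd_eq_right ⟨p*q^2, by ring⟩]
    have e : p ^ 2 * q ^ 2 = (p * q ^ 2) * p := by ring
    rw [e, Nat.mul_div_cancel _ hp0]
  have o3 : orderOf (c ^ (p * q ^ 2)) = p := by
    rw [orderOf_pow' c (by positivity), hc, Nat.gcd_eq_right ⟨p, by ring⟩]
    have e : p ^ 2 * q ^ 2 = p * (p * q ^ 2) := by ring
    rw [e, Nat.mul_div_cancel _ (by positivity)]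
  have o4 : orderOf (c ^ (p ^ 2 * q)) = q := by
    rw [orderOf_pow' c (by positivity), hc, Nat.gcd_eq_right ⟨q, by ring⟩]
    have e : p ^ 2 * q ^ 2 = q * (p ^ 2 * q) := by ring
    rw [e, Nat.mul_div_cancel _ (by positivity)]
  -- memberships
  have M1 : c ^ (p * q ^ 2) ∈ zpowers (c ^ q) := by
    have e : (c ^ q) ^ (p * q) = c ^ (p * q ^ 2) := by rw [← pow_mul]; try congr 1; try ring
    exact e ▸ Subgroup.pow_mem _ (Subgroup.mem_zpowers _) _
  have M2 : c ^ (p * q ^ 2) ∈ zpowers (c ^ p) := by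
    have e : (c ^ p) ^ (q ^ 2) = c ^ (p * q ^ 2) := by rw [← pow_mul]; try congr 1; try ring
    exact e ▸ Subgroup.pow_mem _ (Subgroup.mem_zpowers _) _
  have M3 : c ^ (p ^ 2 * q) ∈ zpowers (c ^ p) := by
    have e : (c ^ p) ^ (p * q) = c ^ (p ^ 2 * q) := by rw [← pow_mul]; try congr 1; try ring
    exact e ▸ Subgroup.pow_mem _ (Subgroup.mem_zpowers _) _
  have M4 : c ^ (p ^ 2 * q) ∈ zpowers (c ^ q) := by
    have e : (c ^ q) ^ (p ^ 2) = c ^ (p ^ 2 * q) := by rw [← pow_mul]; try congr 1; try ring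
    exact e ▸ Subgroup.pow_mem _ (Subgroup.mem_zpowers _) _
  -- numeric distinctions
  have n1 : p ^ 2 * q ≠ p := fun e => hdqp (e ▸ ⟨p^2, by ring⟩)
  have n2 : p ^ 2 * q ≠ q := fun e => hdpq (e ▸ ⟨p*q, by ring⟩)
  have n3 : p ^ 2 * q ≠ p * q ^ 2 := by
    intro e
    have h1 : q * q ∣ p ^ 2 * q := by rw [e]; exact ⟨p, by ring⟩
    have h2 : q ∣ p ^ 2 := (Nat.mul_dvd_mul_iff_right hq0).mp h1
    exact hdqp (hq.dvd_of_dvd_pow h2)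
  have n4 : p ≠ p * q ^ 2 := by
    intro e
    have h1 : p * 1 = p * q ^ 2 := by rw [mul_one]; exact e
    have h2 : q ^ 2 = 1 := (Nat.eq_of_mul_eq_mul_left hp0 h1).symm
    exact absurd h2 (Nat.one_lt_pow two_ne_zero hq.one_lt).ne'
  have n5 : p * q ^ 2 ≠ q := by
    intro e
    have h1 : (p * q) * q = 1 * q := by
      rw [one_mul, show p * q * q = p * q ^ 2 from by ring]; exact e
    have h2 : p * q = 1 := Nat.eq_of_mul_eq_mul_right hq0 h1
    have h3 : p ∣ 1 := ⟨q, h2.symm⟩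
    exact hp.one_lt.ne' (Nat.dvd_one.mp h3)
  have neOrd : ∀ {y z : G}, orderOf y ≠ orderOf z → y ≠ z := fun hne e => hne (by rw [e])
  have d1 : c ^ q ≠ c ^ (p * q ^ 2) := neOrd (by rw [o1, o3]; exact n1)
  have d2 : c ^ q ≠ c ^ p := neOrd (by rw [o1, o2]; exact n3)
  have d3 : c ^ q ≠ c ^ (p ^ 2 * q) := neOrd (by rw [o1, o4]; exact n2)
  have d4 : c ^ (p * q ^ 2) ≠ c ^ p := neOrd (by rw [o3, o2]; exact n4)
  have d5 : c ^ (p * q ^ 2) ≠ c ^ (p ^ 2 * q) := neOrd (by rw [o3, o4]; exact hpq)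
  have d6 : c ^ p ≠ c ^ (p ^ 2 * q) := neOrd (by rw [o2, o4]; exact n5)
  -- nonadjacency of c^q and c^p
  have N1 : ¬ pgAdj (c ^ q) (c ^ p) := by
    rintro ⟨-, hmm | hmm⟩
    · have hd := orderOf_dvd_of_mem_zpowers hmm
      rw [o1, o2] at hd
      -- p^2*q ∣ p*q^2  ⇒  p ∣ q^2
      have h1 : p * p ∣ p * q ^ 2 := dvd_trans ⟨q, by ring⟩ hd
      have h2 : p ∣ q ^ 2 := (Nat.mul_dvd_mul_iff_left hp0).mp h1
      exact hdpq (hp.dvd_of_dvd_pow h2)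
    · have hd := orderOf_dvd_of_mem_zpowers hmm
      rw [o1, o2] at hd
      have h1 : q * q ∣ p ^ 2 * q := dvd_trans ⟨p, by ring⟩ hd
      have h2 : q ∣ p ^ 2 := (Nat.mul_dvd_mul_iff_right hq0).mp h1
      exact hdqp (hq.dvd_of_dvd_pow h2)
  have N2 : ¬ pgAdj (c ^ (p * q ^ 2)) (c ^ (p ^ 2 * q)) := by
    rintro ⟨-, hmm | hmm⟩
    · have hd := orderOf_dvd_of_mem_zpowers hmm
      rw [o3, o4] at hd
      exact hdpq hd
    · have hd := orderOf_dvd_of_mem_zpowers hmm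
      rw [o3, o4] at hd
      exact hdqp hd
  exact ⟨c ^ q, c ^ (p * q ^ 2), c ^ p, c ^ (p ^ 2 * q), d1, d2, d3, d4, d5, d6,
    ⟨d1, Or.inr M1⟩, ⟨d4, Or.inl M2⟩, ⟨d6, Or.inr M3⟩, ⟨d3.symm, Or.inl M4⟩, N1, N2⟩

end Helpers3

section Key
variable {G : Type*} [Group G] [Finite G]

/-- Key lemma 1: any element of order `p` commuting with `x` (of order `p^m*q`, `m ≥ 2`)
has the canonical central order-`p` element in its cyclic group. -/
lemma pg_key1 (h4 : pgC4Free G) {p q m : ℕ} (hp : p.Prime) (hq : q.Prime)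
    (hpq : p ≠ q) (hm : 2 ≤ m) {x : G} (hx : orderOf x = p ^ m * q)
    {w : G} (cxw : Commute x w) (hw : orderOf w = p) :
    x ^ (q * p ^ (m-1)) ∈ zpowers w := by
  have hm1 : m - 1 ≠ 0 := by omega
  have hm1' : m - 1 + 1 = m := by omega
  have hpm_split : p ^ m = p ^ (m-1) * p := by rw [← pow_succ, hm1']
  set a := x ^ q with ha_def
  set b := x ^ (p ^ m) with hb_def
  have ha : orderOf a = p ^ m := by
    rw [ha_def, orderOf_pow' x hq.pos.ne', hx, Nat.gcd_eq_right ⟨p^m, mul_comm _ _⟩,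
      Nat.mul_div_cancel _ hq.pos]
  have hb : orderOf b = q := by
    rw [hb_def, orderOf_pow' x (pow_ne_zero _ hp.pos.ne'), hx,
      Nat.gcd_eq_right ⟨q, rfl⟩]
    have e : p ^ m * q = q * p ^ m := mul_comm _ _
    rw [e, Nat.mul_div_cancel _ (Nat.pow_pos hp.pos)]
  have cwa : Commute w a := (cxw.symm.pow_right q)
  have cwb : Commute w b := (cxw.symm.pow_right (p ^ m))
  have cab : Commute a b := (Commute.refl x).pow_pow q (p ^ m)
  -- w ∈ zpowers a
  have hwa : w ∈ zpowers a := pg_orderp_mem h4 hp hq hpq hm hw ha hb cwa cwb cab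
  -- a' = a ^ p^(m-1)
  have ha'a : x ^ (q * p ^ (m-1)) = a ^ p ^ (m-1) := pow_mul x q (p ^ (m-1))
  have oa' : orderOf (a ^ p ^ (m-1)) = p := by
    rw [orderOf_pow' a (pow_ne_zero _ hp.pos.ne'), ha,
      Nat.gcd_eq_right (pow_dvd_pow p (Nat.sub_le m 1)), hpm_split,
      Nat.mul_div_cancel_left _ (Nat.pow_pos hp.pos)]
  -- get natural power representation
  obtain ⟨n, hn⟩ := (mem_powers_iff_mem_zpowers.mpr hwa : w ∈ Submonoid.powers a)
  dsimp only at hn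
  have hn0 : n ≠ 0 := by
    intro e
    rw [e, pow_zero] at hn
    rw [← hn, orderOf_one] at hw
    exact hp.one_lt.ne' hw.symm
  -- gcd (p^m) n = p^(m-1)
  have hgcd : Nat.gcd (p ^ m) n = p ^ (m-1) := by
    have h1 : orderOf (a ^ n) = p := by rw [hn, hw]
    rw [orderOf_pow' a hn0, ha] at h1
    have hdvd : Nat.gcd (p ^ m) n ∣ p ^ m := Nat.gcd_dvd_left _ _
    have h2 : Nat.gcd (p ^ m) n * (p ^ m / Nat.gcd (p ^ m) n) = p ^ m :=
      Nat.mul_div_cancel' hdvd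
    rw [h1] at h2
    exact Nat.eq_of_mul_eq_mul_right hp.pos (h2.trans hpm_split)
  obtain ⟨s, hs⟩ : p ^ (m-1) ∣ n := hgcd ▸ Nat.gcd_dvd_right (p ^ m) n
  -- w = (a^(p^(m-1)))^s
  have hws : (a ^ p ^ (m-1)) ^ s = w := by rw [← pow_mul, ← hs]; exact hn
  -- zpowers w = zpowers a'
  have hle : zpowers w ≤ zpowers (a ^ p ^ (m-1)) :=
    Subgroup.zpowers_le.mpr (hws ▸ Subgroup.pow_mem _ (Subgroup.mem_zpowers _) s)
  have heq : zpowers w = zpowers (a ^ p ^ (m-1)) := by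
    apply Subgroup.eq_of_le_of_card_ge hle
    rw [Nat.card_zpowers, Nat.card_zpowers, hw, oa']
  rw [ha'a, heq]
  exact Subgroup.mem_zpowers _

/-- Key lemma 2: any two nontrivial p-elements commuting with `x` are comparable. -/
lemma pg_key2 (h4 : pgC4Free G) {p q m : ℕ} (hp : p.Prime) (hq : q.Prime)
    (hpq : p ≠ q) (hm : 2 ≤ m) {x : G} (hx : orderOf x = p ^ m * q)
    {g h : G} (cxg : Commute x g) (cxh : Commute x h) {k l : ℕ}
    (hk : k ≠ 0) (hl : l ≠ 0)
    (hg : orderOf g = p ^ k) (hh : orderOf h = p ^ l) :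
    g ∈ zpowers h ∨ h ∈ zpowers g := by
  have hb : orderOf (x ^ (p ^ m)) = q := by
    rw [orderOf_pow' x (pow_ne_zero _ hp.pos.ne'), hx, Nat.gcd_eq_right ⟨q, rfl⟩,
      show p ^ m * q = q * p ^ m from mul_comm _ _,
      Nat.mul_div_cancel _ (Nat.pow_pos hp.pos)]
  have oa' : orderOf (x ^ (q * p ^ (m-1))) = p := by
    have h1 : q * p ^ (m-1) ∣ p ^ m * q := by
      rw [mul_comm]
      exact Nat.mul_dvd_mul (pow_dvd_pow p (Nat.sub_le m 1)) dvd_rfl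
    rw [orderOf_pow' x (Nat.mul_ne_zero hq.pos.ne' (pow_ne_zero _ hp.pos.ne')), hx,
      Nat.gcd_eq_right h1,
      show p ^ m * q = (q * p ^ (m-1)) * p from by
        rw [show p ^ m = p ^ (m-1) * p from by rw [← pow_succ]; congr 1; omega]; ring,
      Nat.mul_div_cancel_left _ (Nat.mul_pos hq.pos (Nat.pow_pos hp.pos))]
  -- order p parts of g and h
  have key : ∀ (z : G), Commute x z → ∀ j : ℕ, j ≠ 0 → orderOf z = p ^ j →
      x ^ (q * p ^ (m-1)) ∈ zpowers z := by
    intro z cxz j hj hz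
    have hoz : orderOf (z ^ p ^ (j-1)) = p := by
      rw [orderOf_pow' z (pow_ne_zero _ hp.pos.ne'), hz,
        Nat.gcd_eq_right (pow_dvd_pow p (Nat.sub_le j 1)),
        show p ^ j = p ^ (j-1) * p from by rw [← pow_succ]; congr 1; omega,
        Nat.mul_div_cancel_left _ (Nat.pow_pos hp.pos)]
    have c2 : Commute x (z ^ p ^ (j-1)) := cxz.pow_right _
    have h1 := pg_key1 h4 hp hq hpq hm hx c2 hoz
    exact (Subgroup.zpowers_le.mpr (Subgroup.pow_mem _ (Subgroup.mem_zpowers z) _)) h1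
  have hug : x ^ (q * p ^ (m-1)) ∈ zpowers g := key g cxg k hk hg
  have huh : x ^ (q * p ^ (m-1)) ∈ zpowers h := key h cxh l hl hh
  exact pg_comparable h4 hp hq hpq hk hl hg hh hb
    (cxg.symm.pow_right (p ^ m)) (cxh.symm.pow_right (p ^ m)) oa' hug huh

end Key

theorem centralizer_structure_of_order_pmq {G : Type*} [Group G] [Finite G]
    (h : pgC4Free G) (p q m : ℕ) (hp : p.Prime) (hq : q.Prime) (hpq : p ≠ q)
    (hm : 1 < m) (x : G) (hx : orderOf x = p ^ m * q) :
    (∀ P : Sylow p (Subgroup.centralizer ({x} : Set G)),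
        IsCyclic ((hughesSubgroup p (P : Subgroup (Subgroup.centralizer ({x} : Set G)))).map
            (P : Subgroup (Subgroup.centralizer ({x} : Set G))).subtype) ∧
        ((hughesSubgroup p (P : Subgroup (Subgroup.centralizer ({x} : Set G)))).map
            (P : Subgroup (Subgroup.centralizer ({x} : Set G))).subtype).Normal) ∧
    (∀ Q : Sylow q (Subgroup.centralizer ({x} : Set G)),
        Monoid.exponent (Q : Subgroup (Subgroup.centralizer ({x} : Set G))) = q) := by
  classical
  set C := Subgroup.centralizer ({x} : Set G) with hCdef
  have hm2 : 2 ≤ m := hm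
  have hxC : x ∈ C := Subgroup.mem_centralizer_iff.mpr (by
    rintro g hg
    rw [Set.mem_singleton_iff] at hg
    rw [hg])
  have hcomm : ∀ y : C, Commute x (y : G) := fun y =>
    Subgroup.mem_centralizer_iff.mp y.2 x rfl
  -- transfer of zpowers membership
  have coe_zp : ∀ (y z : C), (y : G) ∈ zpowers (z : G) → y ∈ zpowers z := by
    rintro y z ⟨n, hn⟩
    exact ⟨n, Subtype.ext (by rw [SubgroupClass.coe_zpow]; exact hn)⟩
  -- comparability inside C
  have compC : ∀ (y z : C) (k l : ℕ), k ≠ 0 → l ≠ 0 → orderOf y = p ^ k →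
      orderOf z = p ^ l → y ∈ zpowers z ∨ z ∈ zpowers y := by
    intro y z k l hk hl hy hz
    have h1 := pg_key2 h hp hq hpq hm2 hx (hcomm y) (hcomm z) hk hl
      (by rw [Subgroup.orderOf_coe]; exact hy) (by rw [Subgroup.orderOf_coe]; exact hz)
    rcases h1 with h1 | h1
    · exact Or.inl (coe_zp y z h1)
    · exact Or.inr (coe_zp z y h1)
  constructor
  · -- Sylow p part
    intro P
    -- every element of P is a p-element
    have pordP : ∀ (y : C), y ∈ (P : Subgroup C) → ∃ j, orderOf y = p ^ j := by
      intro y hy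
      obtain ⟨k, hk⟩ := P.isPGroup' ⟨y, hy⟩
      obtain ⟨j, -, hj⟩ := (Nat.dvd_prime_pow hp).mp (orderOf_dvd_of_pow_eq_one hk)
      rw [Subgroup.orderOf_mk] at hj
      exact ⟨j, hj⟩
    have pordP' : ∀ (y : C), y ∈ (P : Subgroup C) → y ≠ 1 →
        ∃ j, j ≠ 0 ∧ orderOf y = p ^ j := by
      intro y hy hy1
      obtain ⟨j, hj⟩ := pordP y hy
      refine ⟨j, ?_, hj⟩
      intro e
      rw [e, pow_zero] at hj
      exact hy1 (orderOf_eq_one_iff.mp hj)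
    -- maximal-order element of P
    obtain ⟨g0, hg0P, hg0max⟩ := Set.exists_max_image ((P : Subgroup C) : Set C)
      orderOf (Set.toFinite _) ⟨1, Subgroup.one_mem _⟩
    -- every element of P is a power of g0
    have chain : ∀ y : C, y ∈ (P : Subgroup C) → y ∈ zpowers g0 := by
      intro y hy
      by_cases hy1 : y = 1
      · rw [hy1]; exact Subgroup.one_mem _
      obtain ⟨j, hj0, hj⟩ := pordP' y hy hy1
      have hg01 : g0 ≠ 1 := by
        intro e
        have hle := hg0max y hy
        rw [e, orderOf_one] at hle
        have := orderOf_pos y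
        have hy2 : orderOf y = 1 := by omega
        exact hy1 (orderOf_eq_one_iff.mp hy2)
      obtain ⟨k0, hk00, hk0⟩ := pordP' g0 hg0P hg01
      rcases compC y g0 j k0 hj0 hk00 hj hk0 with h1 | h1
      · exact h1
      · have hd := orderOf_dvd_of_mem_zpowers h1
        have hle1 := Nat.le_of_dvd (orderOf_pos y) hd
        have hle2 := hg0max y hy
        have heq : zpowers g0 = zpowers y := by
          apply Subgroup.eq_of_le_of_card_ge (Subgroup.zpowers_le.mpr h1)
          rw [Nat.card_zpowers, Nat.card_zpowers]
          omega
        rw [heq]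
        exact Subgroup.mem_zpowers y
    have PeqZ : (P : Subgroup C) = zpowers g0 :=
      le_antisymm chain (Subgroup.zpowers_le.mpr hg0P)
    -- all nontrivial p-elements of C lie in P
    have allP : ∀ y : C, y ≠ 1 → (∃ j, j ≠ 0 ∧ orderOf y = p ^ j) →
        y ∈ (P : Subgroup C) := by
      rintro y hy1 ⟨j, hj0, hj⟩
      have hpgy : IsPGroup p (zpowers y) := IsPGroup.of_card (by
        rw [Nat.card_zpowers, hj])
      by_cases hg01 : g0 = 1
      · have hQ := P.is_maximal' hpgy (by
          rw [PeqZ, hg01, Subgroup.zpowers_one_eq_bot]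
          exact bot_le)
        rw [← hQ]
        exact Subgroup.mem_zpowers y
      · obtain ⟨k0, hk00, hk0⟩ := pordP' g0 hg0P hg01
        rcases compC y g0 j k0 hj0 hk00 hj hk0 with h1 | h1
        · rw [PeqZ]; exact h1
        · have hQ := P.is_maximal' hpgy (by
            rw [PeqZ]; exact Subgroup.zpowers_le.mpr h1)
          rw [← hQ]
          exact Subgroup.mem_zpowers y
    -- the image of the Hughes subgroup
    set T : Set C := {y : C | y ∈ (P : Subgroup C) ∧ orderOf y ≠ p} with hTdef
    have HT : (hughesSubgroup p (P : Subgroup C)).map (P : Subgroup C).subtype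
        = Subgroup.closure T := by
      rw [hughesSubgroup, MonoidHom.map_closure]
      congr 1
      ext y
      constructor
      · rintro ⟨z, hz, rfl⟩
        refine ⟨z.2, ?_⟩
        have : orderOf ((P : Subgroup C).subtype z) = orderOf z :=
          orderOf_injective _ Subtype.coe_injective z
        rw [this]
        exact hz
      · rintro ⟨hyP, hyo⟩
        refine ⟨⟨y, hyP⟩, ?_, rfl⟩
        show orderOf (⟨y, hyP⟩ : ↥(P : Subgroup C)) ≠ p
        rw [Subgroup.orderOf_mk]
        exact hyo
    have h1T : (1 : C) ∈ T := ⟨Subgroup.one_mem _, by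
      rw [orderOf_one]; exact fun e => hp.one_lt.ne' e.symm⟩
    obtain ⟨g1, hg1T, hg1max⟩ := Set.exists_max_image T orderOf (Set.toFinite _) ⟨1, h1T⟩
    have chainT : ∀ y ∈ T, y ∈ zpowers g1 := by
      intro y hyT
      by_cases hy1 : y = 1
      · rw [hy1]; exact Subgroup.one_mem _
      obtain ⟨j, hj0, hj⟩ := pordP' y hyT.1 hy1
      have hg11 : g1 ≠ 1 := by
        intro e
        have hle := hg1max y hyT
        rw [e, orderOf_one] at hle
        have := orderOf_pos y
        have hy2 : orderOf y = 1 := by omega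
        exact hy1 (orderOf_eq_one_iff.mp hy2)
      obtain ⟨k1, hk10, hk1⟩ := pordP' g1 hg1T.1 hg11
      rcases compC y g1 j k1 hj0 hk10 hj hk1 with h1 | h1
      · exact h1
      · have hd := orderOf_dvd_of_mem_zpowers h1
        have hle1 := Nat.le_of_dvd (orderOf_pos y) hd
        have hle2 := hg1max y hyT
        have heq : zpowers g1 = zpowers y := by
          apply Subgroup.eq_of_le_of_card_ge (Subgroup.zpowers_le.mpr h1)
          rw [Nat.card_zpowers, Nat.card_zpowers]
          omega
        rw [heq]
        exact Subgroup.mem_zpowers y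
    have hclle : Subgroup.closure T ≤ zpowers g1 :=
      (Subgroup.closure_le _).mpr chainT
    have hg1mem : g1 ∈ (hughesSubgroup p (P : Subgroup C)).map (P : Subgroup C).subtype := by
      rw [HT]
      exact Subgroup.subset_closure hg1T
    constructor
    · -- cyclic
      refine ⟨⟨⟨g1, hg1mem⟩, ?_⟩⟩
      intro y
      have hyT : (y : C) ∈ Subgroup.closure T := by rw [← HT]; exact y.2
      obtain ⟨n, hn⟩ := hclle hyT
      exact ⟨n, Subtype.ext (by rw [SubgroupClass.coe_zpow]; exact hn)⟩
    · -- normal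
      refine ⟨?_⟩
      intro n hn c
      have Tconj : ∀ y ∈ T, c * y * c⁻¹ ∈ T := by
        intro y hyT
        have ho : orderOf (c * y * c⁻¹) = orderOf y := by
          have := orderOf_injective (MulAut.conj c).toMonoidHom
            (MulAut.conj c).injective y
          simpa [MulAut.conj_apply] using this
        by_cases hy1 : y = 1
        · rw [hy1]
          simpa using h1T
        · obtain ⟨j, hj0, hj⟩ := pordP' y hyT.1 hy1
          have hne : c * y * c⁻¹ ≠ 1 := by
            intro e
            rw [e, orderOf_one] at ho
            exact hy1 (orderOf_eq_one_iff.mp ho.symm)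
          exact ⟨allP _ hne ⟨j, hj0, by rw [ho]; exact hj⟩, by rw [ho]; exact hyT.2⟩
      have hmap2 : ((hughesSubgroup p (P : Subgroup C)).map (P : Subgroup C).subtype).map
          (MulAut.conj c).toMonoidHom ≤
          (hughesSubgroup p (P : Subgroup C)).map (P : Subgroup C).subtype := by
        rw [HT, MonoidHom.map_closure]
        apply Subgroup.closure_mono
        rintro _ ⟨y, hy, rfl⟩
        simpa [MulAut.conj_apply] using Tconj y hy
      exact hmap2 (Subgroup.mem_map.mpr ⟨n, hn, by simp [MulAut.conj_apply]⟩)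
  · -- Sylow q part
    intro Q
    haveI : Fact q.Prime := ⟨hq⟩
    -- q divides the order of C
    have hbC : x ^ (p ^ m) ∈ C := Subgroup.pow_mem C hxC _
    have hbord : orderOf (⟨x ^ (p ^ m), hbC⟩ : C) = q := by
      rw [Subgroup.orderOf_mk, orderOf_pow' x (pow_ne_zero _ hp.pos.ne'), hx,
        Nat.gcd_eq_right ⟨q, rfl⟩,
        show p ^ m * q = q * p ^ m from mul_comm _ _,
        Nat.mul_div_cancel _ (Nat.pow_pos hp.pos)]
    have hqC : q ∣ Nat.card C := hbord ▸ orderOf_dvd_natCard _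
    -- Q is nontrivial, so contains an element of order q
    have hQcard : Nat.card ↥(Q : Subgroup C) = q ^ (Nat.card C).factorization q :=
      Sylow.card_eq_multiplicity Q
    have hfac : 0 < (Nat.card C).factorization q :=
      hq.factorization_pos_of_dvd Nat.card_pos.ne' hqC
    have hdvdQ : q ∣ Nat.card ↥(Q : Subgroup C) := by
      rw [hQcard]
      exact dvd_pow_self q hfac.ne'
    obtain ⟨y0, hy0⟩ := exists_prime_orderOf_dvd_card' q hdvdQ
    -- every element of Q has order dividing q
    have hall : ∀ y : ↥(Q : Subgroup C), y ^ q = 1 := by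
      intro y
      obtain ⟨k, hk⟩ := Q.isPGroup' y
      obtain ⟨j, -, hj⟩ := (Nat.dvd_prime_pow hq).mp (orderOf_dvd_of_pow_eq_one hk)
      have hjle : j ≤ 1 := by
        by_contra hj2
        push_neg at hj2
        -- y^(q^(j-2)) has order q^2
        have hoz : orderOf (y ^ q ^ (j-2)) = q ^ 2 := by
          rw [orderOf_pow' y (pow_ne_zero _ hq.pos.ne'), hj,
            Nat.gcd_eq_right (pow_dvd_pow q (by omega)),
            show q ^ j = q ^ (j-2) * q ^ 2 from by rw [← pow_add]; congr 1; omega,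
            Nat.mul_div_cancel_left _ (Nat.pow_pos hq.pos)]
        set z : C := ((y ^ q ^ (j-2) : ↥(Q : Subgroup C)) : C) with hzdef
        have hozC : orderOf (z : G) = q ^ 2 := by
          rw [Subgroup.orderOf_coe, hzdef, Subgroup.orderOf_coe]
          exact hoz
        -- x^(q * p^(m-2)) has order p^2
        have hoa2 : orderOf (x ^ (q * p ^ (m-2))) = p ^ 2 := by
          have hdp : q * p ^ (m-2) ∣ p ^ m * q := by
            rw [mul_comm]
            exact Nat.mul_dvd_mul (pow_dvd_pow p (Nat.sub_le m 2)) dvd_rfl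
          rw [orderOf_pow' x (Nat.mul_ne_zero hq.pos.ne' (pow_ne_zero _ hp.pos.ne')), hx,
            Nat.gcd_eq_right hdp,
            show p ^ m * q = (q * p ^ (m-2)) * p ^ 2 from by
              rw [show p ^ m = p ^ (m-2) * p ^ 2 from by rw [← pow_add]; congr 1; omega]
              ring,
            Nat.mul_div_cancel_left _ (Nat.mul_pos hq.pos (Nat.pow_pos hp.pos))]
        -- their product has order p^2 q^2, contradiction with C4-freeness
        have hcxz : Commute x (z : G) := hcomm z
        have hcaz : Commute (x ^ (q * p ^ (m-2))) (z : G) := (hcxz.symm.pow_right _).symm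
        have hcop2 : Nat.Coprime (orderOf (x ^ (q * p ^ (m-2)))) (orderOf (z : G)) := by
          rw [hoa2, hozC]
          exact Nat.Coprime.pow _ _ ((Nat.coprime_primes hp hq).mpr hpq)
        have hoc : orderOf (x ^ (q * p ^ (m-2)) * (z : G)) = p ^ 2 * q ^ 2 := by
          rw [hcaz.orderOf_mul_eq_mul_orderOf_of_coprime hcop2, hoa2, hozC]
        exact h (pg_c4_of_p2q2 hp hq hpq hoc)
      have : orderOf y ∣ q := by
        rw [hj]
        calc q ^ j ∣ q ^ 1 := pow_dvd_pow q hjle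
        _ = q := pow_one q
      exact orderOf_dvd_iff_pow_eq_one.mp this
    have hdvd1 : Monoid.exponent ↥(Q : Subgroup C) ∣ q :=
      Monoid.exponent_dvd_of_forall_pow_eq_one hall
    have hdvd2 : q ∣ Monoid.exponent ↥(Q : Subgroup C) := by
      have h2 := Monoid.order_dvd_exponent y0
      rwa [hy0] at h2
    exact Nat.dvd_antisymm hdvd1 hdvd2
end

section
/- Let G be a finite group whose power graph P(G) is C_4-free, and let x ∈ G be an element of order pq, where p, q are distinct primes. Then either |C_G(x)| = p^u q^v for some non-negative integers u, v, or |C_G(x)| = p^u q^v r^w for some prime r distinct from p and q and positive integers u, v, w. -/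
private lemma aux_mem_zpowers_mul {G : Type*} [Group G] {x y : G} (hc : Commute x y)
    (hco : Nat.Coprime (orderOf y) (orderOf x)) (hx : 1 < orderOf x) :
    x ∈ Subgroup.zpowers (x * y) := by
  obtain ⟨m, -, hm⟩ := Nat.exists_mul_mod_eq_one_of_coprime hco hx
  have key : (x * y) ^ (orderOf y * m) = x := by
    rw [hc.mul_pow, pow_mul y, pow_orderOf_eq_one, one_pow, mul_one,
      ← pow_mod_orderOf, hm, pow_one]
  exact Subgroup.mem_zpowers_iff.mpr ⟨(orderOf y * m : ℕ), by rw [zpow_natCast, key]⟩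

private lemma aux_lt {p q r : ℕ} (hp : 2 ≤ p) (hq : 2 ≤ q) (hr : 2 ≤ r) :
    p < p * q * r ∧ q < p * q * r := by
  have h1 : p * 1 * 1 < p * q * r :=
    Nat.mul_lt_mul_of_lt_of_le (Nat.mul_lt_mul_of_le_of_lt (le_refl p) (by omega) (by omega))
      (by omega) (by omega)
  have h2 : 1 * q * 1 < p * q * r :=
    Nat.mul_lt_mul_of_lt_of_le (Nat.mul_lt_mul_of_lt_of_le (by omega) (le_refl q) (by omega))
      (by omega) (by omega)
  simp only [mul_one, one_mul] at h1 h2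
  exact ⟨h1, h2⟩

set_option maxHeartbeats 1000000 in
/-- Key combinatorial lemma: if the power graph is `C₄`-free and `x` has order `pq`,
then there cannot be two elements of distinct prime orders `r, s ∉ {p,q}` commuting
with `x`. -/
private lemma aux_no_two_extra_primes {G : Type*} [Group G] (h : pgC4Free G)
    {p q r s : ℕ} (hp : p.Prime) (hq : q.Prime) (hr : r.Prime) (hs : s.Prime)
    (hpq : p ≠ q) (hrp : r ≠ p) (hrq : r ≠ q) (hsp : s ≠ p) (hsq : s ≠ q) (hrs : r ≠ s)
    {x y z : G} (hx : orderOf x = p * q) (hy : orderOf y = r) (hz : orderOf z = s)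
    (hxy : Commute x y) (hxz : Commute x z) : False := by
  have hp2 := hp.two_le
  have hq2 := hq.two_le
  have hr2 := hr.two_le
  have hs2 := hs.two_le
  have hpq1 : 1 < p * q := by
    calc 1 < 2 * 2 := by omega
    _ ≤ p * q := Nat.mul_le_mul hp2 hq2
  have hcopr : Nat.Coprime (p * q) r :=
    Nat.Coprime.mul ((Nat.coprime_primes hp hr).mpr (Ne.symm hrp))
      ((Nat.coprime_primes hq hr).mpr (Ne.symm hrq))
  have hcops : Nat.Coprime (p * q) s :=
    Nat.Coprime.mul ((Nat.coprime_primes hp hs).mpr (Ne.symm hsp))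
      ((Nat.coprime_primes hq hs).mpr (Ne.symm hsq))
  set a := x * y with ha_def
  set b := x * z with hb_def
  have ha : orderOf a = p * q * r := by
    rw [ha_def, hxy.orderOf_mul_eq_mul_orderOf_of_coprime (by rw [hx, hy]; exact hcopr),
      hx, hy]
  have hb : orderOf b = p * q * s := by
    rw [hb_def, hxz.orderOf_mul_eq_mul_orderOf_of_coprime (by rw [hx, hz]; exact hcops),
      hx, hz]
  have hxa : x ∈ Subgroup.zpowers a :=
    aux_mem_zpowers_mul hxy (by rw [hx, hy]; exact hcopr.symm) (by rw [hx]; exact hpq1)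
  have hxb : x ∈ Subgroup.zpowers b :=
    aux_mem_zpowers_mul hxz (by rw [hx, hz]; exact hcops.symm) (by rw [hx]; exact hpq1)
  have hxqa : x ^ q ∈ Subgroup.zpowers a := (Subgroup.zpowers a).pow_mem hxa q
  have hxqb : x ^ q ∈ Subgroup.zpowers b := (Subgroup.zpowers b).pow_mem hxb q
  have hxpa : x ^ p ∈ Subgroup.zpowers a := (Subgroup.zpowers a).pow_mem hxa p
  have hxpb : x ^ p ∈ Subgroup.zpowers b := (Subgroup.zpowers b).pow_mem hxb p
  have hoxq : orderOf (x ^ q) = p := by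
    rw [orderOf_pow' (n := q) x (by omega), hx, Nat.gcd_eq_right (dvd_mul_left q p),
      Nat.mul_div_cancel _ (by omega)]
  have hoxp : orderOf (x ^ p) = q := by
    rw [orderOf_pow' (n := p) x (by omega), hx, Nat.gcd_eq_right (dvd_mul_right p q),
      Nat.mul_div_cancel_left _ (by omega)]
  -- all four orders are distinct
  have hne1 : a ≠ x ^ q := fun e => by
    have := congrArg orderOf e; rw [ha, hoxq] at this
    exact (aux_lt hp2 hq2 hr2).1.ne' this
  have hne2 : a ≠ b := fun e => by
    have := congrArg orderOf e; rw [ha, hb] at this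
    exact hrs (Nat.eq_of_mul_eq_mul_left (Nat.mul_pos (by omega) (by omega)) this)
  have hne3 : a ≠ x ^ p := fun e => by
    have := congrArg orderOf e; rw [ha, hoxp] at this
    exact (aux_lt hp2 hq2 hr2).2.ne' this
  have hne4 : (x ^ q) ≠ b := fun e => by
    have := congrArg orderOf e; rw [hb, hoxq] at this
    exact (aux_lt hp2 hq2 hs2).1.ne this
  have hne5 : (x ^ q) ≠ x ^ p := fun e => by
    have := congrArg orderOf e; rw [hoxq, hoxp] at this; exact hpq this
  have hne6 : b ≠ x ^ p := fun e => by
    have := congrArg orderOf e; rw [hb, hoxp] at this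
    exact (aux_lt hp2 hq2 hs2).2.ne' this
  -- diagonals are non-adjacent
  have hdiag1 : ¬ pgAdj a b := by
    rintro ⟨-, hm | hm⟩ <;> have hd := orderOf_dvd_of_mem_zpowers hm
    · rw [ha, hb] at hd
      have : r ∣ p * q * r := dvd_mul_left r (p * q)
      rcases (hr.dvd_mul.mp (this.trans hd)) with h1 | h1
      · rcases hr.dvd_mul.mp h1 with h2 | h2
        · exact hrp ((Nat.prime_dvd_prime_iff_eq hr hp).mp h2)
        · exact hrq ((Nat.prime_dvd_prime_iff_eq hr hq).mp h2)
      · exact hrs ((Nat.prime_dvd_prime_iff_eq hr hs).mp h1)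
    · rw [ha, hb] at hd
      have : s ∣ p * q * s := dvd_mul_left s (p * q)
      rcases (hs.dvd_mul.mp (this.trans hd)) with h1 | h1
      · rcases hs.dvd_mul.mp h1 with h2 | h2
        · exact hsp ((Nat.prime_dvd_prime_iff_eq hs hp).mp h2)
        · exact hsq ((Nat.prime_dvd_prime_iff_eq hs hq).mp h2)
      · exact hrs (((Nat.prime_dvd_prime_iff_eq hs hr).mp h1).symm)
  have hdiag2 : ¬ pgAdj (x ^ q) (x ^ p) := by
    rintro ⟨-, hm | hm⟩ <;> have hd := orderOf_dvd_of_mem_zpowers hm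
    · rw [hoxq, hoxp] at hd
      exact hpq ((Nat.prime_dvd_prime_iff_eq hp hq).mp hd)
    · rw [hoxq, hoxp] at hd
      exact hpq (((Nat.prime_dvd_prime_iff_eq hq hp).mp hd).symm)
  exact h ⟨a, x ^ q, b, x ^ p, hne1, hne2, hne3, hne4, hne5, hne6,
    ⟨hne1, Or.inr hxqa⟩, ⟨hne4, Or.inl hxqb⟩, ⟨hne6, Or.inr hxpb⟩,
    ⟨Ne.symm hne3, Or.inl hxpa⟩, hdiag1, hdiag2⟩

theorem centralizer_card_of_order_pq {G : Type*} [Group G] [Finite G]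
    (h : pgC4Free G) (p q : ℕ) (hp : p.Prime) (hq : q.Prime) (hpq : p ≠ q)
    (x : G) (hx : orderOf x = p * q) :
    (∃ u v : ℕ, Nat.card (Subgroup.centralizer ({x} : Set G)) = p ^ u * q ^ v) ∨
    (∃ r u v w : ℕ, r.Prime ∧ r ≠ p ∧ r ≠ q ∧ 0 < u ∧ 0 < v ∧ 0 < w ∧
      Nat.card (Subgroup.centralizer ({x} : Set G)) = p ^ u * q ^ v * r ^ w) := by
  classical
  set C := Subgroup.centralizer ({x} : Set G) with hC
  set n := Nat.card C with hn
  have hxC : x ∈ C := Subgroup.mem_centralizer_iff.mpr (by rintro g rfl; rfl)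
  have hn0 : n ≠ 0 := Nat.card_pos.ne'
  -- for every prime t dividing n outside {p, q}, we get a commuting element of order t
  have getelt : ∀ t : ℕ, t.Prime → t ∣ n → ∃ y : G, orderOf y = t ∧ Commute x y := by
    intro t ht htn
    haveI : Fact t.Prime := ⟨ht⟩
    obtain ⟨c, hc⟩ := exists_prime_orderOf_dvd_card' (G := C) t htn
    refine ⟨(c : G), by rw [Subgroup.orderOf_coe]; exact hc, ?_⟩
    exact (Subgroup.mem_centralizer_iff.mp c.2 x rfl)
  by_cases hcase : ∀ t : ℕ, t.Prime → t ∣ n → t = p ∨ t = q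
  · -- n = p^u * q^v
    left
    refine ⟨n.factorization p, (n / p ^ n.factorization p).primeFactorsList.length, ?_⟩
    have h1 : p ^ n.factorization p * (n / p ^ n.factorization p) = n :=
      Nat.ordProj_mul_ordCompl_eq_self n p
    have h2 : (n / p ^ n.factorization p) ≠ 0 := (Nat.ordCompl_pos p hn0).ne'
    have h3 : (n / p ^ n.factorization p) =
        q ^ (n / p ^ n.factorization p).primeFactorsList.length := by
      refine Nat.eq_prime_pow_of_unique_prime_dvd h2 ?_
      intro d hd hdvd
      have hdn : d ∣ n := hdvd.trans (Nat.ordCompl_dvd n p)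
      rcases hcase d hd hdn with rfl | rfl
      · exact absurd hdvd (Nat.not_dvd_ordCompl hd hn0)
      · rfl
    conv_lhs => rw [← h1, h3]
  · -- there is an extra prime r
    push_neg at hcase
    obtain ⟨r, hr, hrn, hrp, hrq⟩ := hcase
    right
    -- every prime dividing n is p, q, or r
    have hall : ∀ t : ℕ, t.Prime → t ∣ n → t = p ∨ t = q ∨ t = r := by
      intro t ht htn
      by_contra hcon
      push_neg at hcon
      obtain ⟨htp, htq, htr⟩ := hcon
      obtain ⟨y, hy, hxy⟩ := getelt r hr hrn
      obtain ⟨z, hz, hxz⟩ := getelt t ht htn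
      exact aux_no_two_extra_primes h hp hq hr ht hpq hrp hrq htp htq
        (fun e => htr e.symm) hx hy hz hxy hxz
    -- decompose n = p^u * q^v * r^w
    set u := n.factorization p with hu
    set m := n / p ^ u with hm
    set v := m.factorization q with hv
    set k := m / q ^ v with hk
    have h1 : p ^ u * m = n := Nat.ordProj_mul_ordCompl_eq_self n p
    have hm0 : m ≠ 0 := (Nat.ordCompl_pos p hn0).ne'
    have h2 : q ^ v * k = m := Nat.ordProj_mul_ordCompl_eq_self m q
    have hk0 : k ≠ 0 := (Nat.ordCompl_pos q hm0).ne'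
    have hkdvdm : k ∣ m := Nat.ordCompl_dvd m q
    have hmdvdn : m ∣ n := Nat.ordCompl_dvd n p
    have h3 : k = r ^ k.primeFactorsList.length := by
      refine Nat.eq_prime_pow_of_unique_prime_dvd hk0 ?_
      intro d hd hdvd
      have hdn : d ∣ n := (hdvd.trans hkdvdm).trans hmdvdn
      rcases hall d hd hdn with rfl | rfl | rfl
      · exact absurd (hdvd.trans hkdvdm) (Nat.not_dvd_ordCompl hd hn0)
      · exact absurd hdvd (Nat.not_dvd_ordCompl hd hm0)
      · rfl
    -- positivity
    have hdvn : p * q ∣ n := hx ▸ C.orderOf_dvd_natCard hxC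
    have hpn : p ∣ n := (dvd_mul_right p q).trans hdvn
    have hqn : q ∣ n := (dvd_mul_left q p).trans hdvn
    have hupos : 0 < u := hp.factorization_pos_of_dvd hn0 hpn
    have hqm : q ∣ m := by
      have hco : Nat.Coprime q (p ^ u) :=
        Nat.Coprime.pow_right _ ((Nat.coprime_primes hq hp).mpr (Ne.symm hpq))
      exact hco.dvd_of_dvd_mul_left (h1 ▸ hqn)
    have hvpos : 0 < v := hq.factorization_pos_of_dvd hm0 hqm
    have hrk : r ∣ k := by
      have hco1 : Nat.Coprime r (p ^ u) := Nat.Coprime.pow_right _ ((Nat.coprime_primes hr hp).mpr hrp)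
      have hco2 : Nat.Coprime r (q ^ v) := Nat.Coprime.pow_right _ ((Nat.coprime_primes hr hq).mpr hrq)
      have hrm : r ∣ m := hco1.dvd_of_dvd_mul_left (h1 ▸ hrn)
      exact hco2.dvd_of_dvd_mul_left (h2 ▸ hrm)
    have hwpos : 0 < k.primeFactorsList.length := by
      have hr2 := hr.two_le
      rcases Nat.eq_zero_or_pos k.primeFactorsList.length with he | he
      · rw [h3, he, pow_zero] at hrk
        exact absurd (Nat.le_of_dvd one_pos hrk) (by omega)
      · exact he
    exact ⟨r, u, v, k.primeFactorsList.length, hr, hrp, hrq, hupos, hvpos, hwpos,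
      by conv_lhs => rw [← h1, ← h2, h3]
         rw [mul_assoc]⟩
end
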